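/- arXiv:1209.6421 — 2 statements merged into one kernel-verified Lean document; each statement's English description precedes it below -/
import Mathlib

section
/- For every integer k > 0, the space 𝒫_k is a topological Ramsey space: every subset of 𝒫_k with the Baire property with respect to the Ellentuck topology on 𝒫_k is Ramsey, and every meager subset of 𝒫_k is Ramsey null. -/
open Set

/-- A candidate pair: a vertex set `x ⊆ ℕ` together with a collection of finite subsets of ℕ. -/
abbrev PPair : Type := Set ℕ × Set (Finset ℕ)

/-- `S` is hereditary: subsets of members are members. -/
def Hereditary (S : Set (Finset ℕ)) : Prop := ∀ u v : Finset ℕ, u ⊆ v → v ∈ S → u ∈ S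

/-- `(x, S)` is a polyhedron pair: members of `S` are finite subsets of `x`,
`S` is hereditary, and `⋃ S = x`. -/
def IsPolyPair (P : PPair) : Prop :=
  (∀ u ∈ P.2, (u : Set ℕ) ⊆ P.1) ∧ Hereditary P.2 ∧ (∀ n ∈ P.1, ∃ u ∈ P.2, n ∈ u)

/-- Members of `𝒫`: polyhedron pairs with infinite vertex set. -/
def InfPoly (P : PPair) : Prop := IsPolyPair P ∧ P.1.Infinite

/-- Members of `𝒜𝒫`: polyhedron pairs with finite vertex set. -/
def FinPoly (P : PPair) : Prop := IsPolyPair P ∧ P.1.Finite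

/-- `x ↾ n` : the set of the `n` smallest elements of `x`. -/
noncomputable def vrestrict (x : Set ℕ) (n : ℕ) : Finset ℕ :=
  (Finset.range n).image (Nat.nth (· ∈ x))

/-- `S ↾ a = {u ∩ a : u ∈ S}`. -/
def frestrict (S : Set (Finset ℕ)) (a : Finset ℕ) : Set (Finset ℕ) :=
  (fun u => u ∩ a) '' S

/-- The `n`-th approximation `r_n(x,S) = (x ↾ n, S ↾ (x ↾ n))`. -/
noncomputable def approx (n : ℕ) (P : PPair) : PPair :=
  (↑(vrestrict P.1 n), frestrict P.2 (vrestrict P.1 n))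

/-- `(y,T) ≤ (x,S)` iff `y ⊆ x` and `T ⊆ S`. -/
def ple (P Q : PPair) : Prop := P.1 ⊆ Q.1 ∧ P.2 ⊆ Q.2

/-- The space `𝒫_k`: infinite polyhedron pairs whose faces have at most `k` vertices. -/
def PolyK (k : ℕ) : Type := {P : PPair // InfPoly P ∧ ∀ u ∈ P.2, u.card ≤ k}

/-- The Ellentuck neighborhood `[(a,S_a); (A,S_A)]` as a subset of `𝒫_k`. -/
noncomputable def knbhd (k : ℕ) (a : PPair) (A : PolyK k) : Set (PolyK k) :=
  {B | ple B.1 A.1 ∧ ∃ n, approx n B.1 = a}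

/-- The Ellentuck topology on `𝒫_k`, generated by the neighborhoods `[(a,S_a); (A,S_A)]`
with `(a,S_a) ∈ 𝒜𝒫_k` and `(A,S_A) ∈ 𝒫_k`. -/
noncomputable def kTop (k : ℕ) : TopologicalSpace (PolyK k) :=
  TopologicalSpace.generateFrom
    {s | ∃ a A, FinPoly a ∧ (∀ u ∈ a.2, u.card ≤ k) ∧ s = knbhd k a A}

/-- `𝒳 ⊆ 𝒫_k` is Ramsey. -/
def KIsRamsey (k : ℕ) (X : Set (PolyK k)) : Prop :=
  ∀ (a : PPair) (A : PolyK k), FinPoly a → (∀ u ∈ a.2, u.card ≤ k) →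
    (knbhd k a A).Nonempty →
    ∃ B ∈ knbhd k a A, knbhd k a B ⊆ X ∨ knbhd k a B ∩ X = ∅

/-- `𝒳 ⊆ 𝒫_k` is Ramsey null. -/
def KIsRamseyNull (k : ℕ) (X : Set (PolyK k)) : Prop :=
  ∀ (a : PPair) (A : PolyK k), FinPoly a → (∀ u ∈ a.2, u.card ≤ k) →
    (knbhd k a A).Nonempty →
    ∃ B ∈ knbhd k a A, knbhd k a B ∩ X = ∅

/-- `𝒳` has the Baire property w.r.t. the Ellentuck topology on `𝒫_k`. -/
def KHasBaireProperty (k : ℕ) (X : Set (PolyK k)) : Prop :=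
  ∃ U M : Set (PolyK k), @IsOpen (PolyK k) (kTop k) U ∧ @IsMeagre (PolyK k) (kTop k) M ∧
    X = symmDiff U M


namespace PolyCore

/-- `s` is an initial segment of the set `M`. -/
def Init (s : Finset ℕ) (M : Set ℕ) : Prop :=
  ↑s ⊆ M ∧ ∀ x ∈ M, x ∉ s → ∀ y ∈ s, y < x

/-- Ellentuck basic set determined by stem `s` inside `Y`. -/
def ebasic (s : Finset ℕ) (Y : Set ℕ) : Set (Set ℕ) :=
  {M | M.Infinite ∧ Init s M ∧ M ⊆ Y}

/-- all elements of `Z` are above all of `s`. -/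
def above (s : Finset ℕ) (Z : Set ℕ) : Prop := ∀ x ∈ Z, ∀ y ∈ s, y < x

/-- `s` is an initial segment of the finset `t`. -/
def InitF (s t : Finset ℕ) : Prop := s ⊆ t ∧ ∀ x ∈ t, x ∉ s → ∀ y ∈ s, y < x

lemma init_union {s : Finset ℕ} {Z : Set ℕ} (h : above s Z) : Init s (↑s ∪ Z) := by
  refine ⟨subset_union_left, ?_⟩
  rintro x (hx | hx) hxs y hy
  · exact absurd hx hxs
  · exact h x hx y hy

lemma init_comparable {s t : Finset ℕ} {M : Set ℕ} (hs : Init s M) (ht : Init t M) :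
    s ⊆ t ∨ t ⊆ s := by
  by_contra hc
  push_neg at hc
  obtain ⟨hst, hts⟩ := hc
  obtain ⟨a, ha, hat⟩ := Finset.not_subset.1 hst
  obtain ⟨c, hc, hcs⟩ := Finset.not_subset.1 hts
  have h1 : c < a := ht.2 a (hs.1 ha) hat c hc
  have h2 : a < c := hs.2 c (ht.1 hc) hcs a ha
  exact absurd h1 (lt_asymm h2)

lemma init_initF {s t : Finset ℕ} {M : Set ℕ} (hs : Init s M) (ht : Init t M)
    (hst : s ⊆ t) : InitF s t := by
  refine ⟨hst, fun x hx hxs y hy => hs.2 x (ht.1 hx) hxs y hy⟩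

lemma init_of_initF {s t : Finset ℕ} {M : Set ℕ} (h : InitF s t) (ht : Init t M) :
    Init s M := by
  refine ⟨fun x hx => ht.1 (h.1 hx), fun x hx hxs y hy => ?_⟩
  by_cases hxt : x ∈ t
  · exact h.2 x hxt hxs y hy
  · exact ht.2 x hx hxt y (h.1 hy)

lemma init_card_unique {s t : Finset ℕ} {M : Set ℕ} (hs : Init s M) (ht : Init t M)
    (h : s.card = t.card) : s = t := by
  rcases init_comparable hs ht with hc | hc
  · exact Finset.eq_of_subset_of_card_le hc h.ge
  · exact (Finset.eq_of_subset_of_card_le hc h.le).symm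

lemma init_sub_of_card_le {s t : Finset ℕ} {M : Set ℕ} (hs : Init s M) (ht : Init t M)
    (h : s.card ≤ t.card) : s ⊆ t := by
  rcases init_comparable hs ht with hc | hc
  · exact hc
  · exact le_of_eq (Finset.eq_of_subset_of_card_le hc h).symm

lemma ebasic_mono {s : Finset ℕ} {Y Y' : Set ℕ} (h : Y ⊆ Y') : ebasic s Y ⊆ ebasic s Y' :=
  fun _ hM => ⟨hM.1, hM.2.1, hM.2.2.trans h⟩

lemma ebasic_stem_mono {s t : Finset ℕ} {Y : Set ℕ} (h : InitF s t) :
    ebasic t Y ⊆ ebasic s Y := fun _ hM => ⟨hM.1, init_of_initF h hM.2.1, hM.2.2⟩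

lemma self_mem_ebasic {s : Finset ℕ} {W : Set ℕ} (h1 : W.Infinite) (h2 : Init s W) :
    W ∈ ebasic s W := ⟨h1, h2, subset_rfl⟩

lemma ebasic_trans {s : Finset ℕ} {W Y : Set ℕ} (h : W ∈ ebasic s Y) :
    ebasic s W ⊆ ebasic s Y := fun _ hM => ⟨hM.1, hM.2.1, hM.2.2.trans h.2.2⟩

lemma diff_finset_infinite {M : Set ℕ} (h : M.Infinite) (t : Finset ℕ) :
    (M \ ↑t).Infinite := h.diff (t.finite_toSet)

lemma inter_Ioi_infinite {Z : Set ℕ} (h : Z.Infinite) (x : ℕ) : (Z ∩ Set.Ioi x).Infinite := by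
  have : Z \ Set.Iic x ⊆ Z ∩ Set.Ioi x := by
    intro z hz
    exact ⟨hz.1, (lt_of_not_ge fun hle => hz.2 hle : x < z)⟩
  exact ((h.diff (Set.finite_Iic x)).mono this)

/-- the part of `Z` above all of `t` is infinite. -/
lemma inter_above_infinite {Z : Set ℕ} (h : Z.Infinite) (t : Finset ℕ) :
    (Z ∩ {x | ∀ y ∈ t, y < x}).Infinite := by
  have hfin : (⋃ y ∈ t, Set.Iic y).Finite :=
    Set.Finite.biUnion t.finite_toSet (fun y _ => Set.finite_Iic y)
  refine ((h.diff hfin).mono ?_)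
  intro z hz
  refine ⟨hz.1, fun y hy => ?_⟩
  by_contra hlt
  exact hz.2 (Set.mem_biUnion hy (not_lt.1 hlt))

lemma init_above {s : Finset ℕ} {M : Set ℕ} (h : Init s M) : above s (M \ ↑s) :=
  fun x hx y hy => h.2 x hx.1 (by exact_mod_cast hx.2) y hy

end PolyCore


namespace PolyCore

lemma setOf_mem_eq' (M : Set ℕ) : {x | (fun y => y ∈ M) x} = M := rfl

lemma vr_subset {M : Set ℕ} (hM : M.Infinite) (m : ℕ) : ↑(vrestrict M m) ⊆ M := by
  intro x hx
  simp only [vrestrict, Finset.coe_image, Set.mem_image, Finset.mem_coe,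
    Finset.mem_range] at hx
  obtain ⟨i, _, rfl⟩ := hx
  exact Nat.nth_mem_of_infinite (by simpa [setOf_mem_eq'] using hM) i

lemma vr_card {M : Set ℕ} (hM : M.Infinite) (m : ℕ) : (vrestrict M m).card = m := by
  rw [vrestrict, Finset.card_image_of_injective _
    (Nat.nth_injective (by simpa [setOf_mem_eq'] using hM)), Finset.card_range]

lemma vr_init {M : Set ℕ} (hM : M.Infinite) (m : ℕ) : Init (vrestrict M m) M := by
  have hM' : {x | (fun y => y ∈ M) x}.Infinite := by simpa [setOf_mem_eq'] using hM
  refine ⟨vr_subset hM m, ?_⟩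
  intro x hxM hx y hy
  simp only [vrestrict, Finset.mem_image, Finset.mem_range] at hx hy
  obtain ⟨i, hi, rfl⟩ := hy
  classical
  have hxx : Nat.nth (· ∈ M) (Nat.count (· ∈ M) x) = x := Nat.nth_count hxM
  set j := Nat.count (· ∈ M) x with hj
  have hjm : ¬ j < m := fun hjm => hx ⟨j, hjm, hxx⟩
  have : i < j := lt_of_lt_of_le hi (not_lt.1 hjm)
  calc Nat.nth (· ∈ M) i < Nat.nth (· ∈ M) j := (Nat.nth_lt_nth hM').2 this
    _ = x := hxx

lemma vr_eq_of_init {M : Set ℕ} {t : Finset ℕ} (hM : M.Infinite) (h : Init t M) :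
    vrestrict M t.card = t :=
  init_card_unique (vr_init hM _) h (by rw [vr_card hM])

lemma vr_mono {M : Set ℕ} {m m' : ℕ} (h : m ≤ m') : vrestrict M m ⊆ vrestrict M m' :=
  Finset.image_subset_image (by simpa using Finset.range_subset_range.2 h)

lemma vr_agree {N N' : Set ℕ} {t : Finset ℕ} {m : ℕ} (hN : N.Infinite) (hN' : N'.Infinite)
    (ht : Init t N) (ht' : Init t N') (hm : m ≤ t.card) :
    vrestrict N' m = vrestrict N m := by
  have hA : Init (vrestrict N m) N := vr_init hN m
  have hcard : (vrestrict N m).card = m := vr_card hN m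
  have hsub : vrestrict N m ⊆ t := init_sub_of_card_le hA ht (by rw [hcard]; exact hm)
  have hIF : InitF (vrestrict N m) t := init_initF hA ht hsub
  have hA' : Init (vrestrict N m) N' := init_of_initF hIF ht'
  have := vr_eq_of_init hN' hA'
  rw [hcard] at this
  exact this

lemma vr_subset_of_card_le {N : Set ℕ} {t : Finset ℕ} {m : ℕ} (hN : N.Infinite)
    (ht : Init t N) (hm : m ≤ t.card) : vrestrict N m ⊆ t :=
  init_sub_of_card_le (vr_init hN m) ht (by rw [vr_card hN]; exact hm)

end PolyCore

namespace PolyCore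

variable (𝒪 : Set (Set ℕ))

/-- `Z` accepts stem `t` (w.r.t. `𝒪`). -/
def acc (t : Finset ℕ) (Z : Set ℕ) : Prop := ebasic t (↑t ∪ Z) ⊆ 𝒪

/-- `Z` rejects stem `t`. -/
def rej (t : Finset ℕ) (Z : Set ℕ) : Prop :=
  ∀ Z' ⊆ Z, Z'.Infinite → ¬ acc 𝒪 t Z'

variable {𝒪}

lemma acc_mono {t : Finset ℕ} {Z Z' : Set ℕ} (h : Z' ⊆ Z) (ha : acc 𝒪 t Z) :
    acc 𝒪 t Z' :=
  fun _ hM => ha (ebasic_mono (Set.union_subset_union_right _ h) hM)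

lemma rej_mono {t : Finset ℕ} {Z Z' : Set ℕ} (h : Z' ⊆ Z) (hr : rej 𝒪 t Z) :
    rej 𝒪 t Z' := fun Z'' h'' hi => hr Z'' (h''.trans h) hi

lemma decide (t : Finset ℕ) (Z : Set ℕ) (hZ : Z.Infinite) :
    ∃ Z', Z' ⊆ Z ∧ Z'.Infinite ∧ (acc 𝒪 t Z' ∨ rej 𝒪 t Z') := by
  by_cases h : ∃ Z', Z' ⊆ Z ∧ Z'.Infinite ∧ acc 𝒪 t Z'
  · obtain ⟨Z', h1, h2, h3⟩ := h
    exact ⟨Z', h1, h2, Or.inl h3⟩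
  · push_neg at h
    exact ⟨Z, subset_rfl, hZ, Or.inr (fun Z' h1 h2 => h Z' h1 h2)⟩

lemma decide_finset (T : Finset (Finset ℕ)) :
    ∀ (Z : Set ℕ), Z.Infinite →
      ∃ Z', Z' ⊆ Z ∧ Z'.Infinite ∧ ∀ t ∈ T, acc 𝒪 t Z' ∨ rej 𝒪 t Z' := by
  classical
  induction T using Finset.induction_on with
  | empty => exact fun Z hZ => ⟨Z, subset_rfl, hZ, by simp⟩
  | insert _ _ hnotmem ih =>
    rename_i t T'
    intro Z hZ
    obtain ⟨Z₁, h1, h2, h3⟩ := ih Z hZ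
    obtain ⟨Z₂, g1, g2, g3⟩ := decide (𝒪 := 𝒪) t Z₁ h2
    refine ⟨Z₂, g1.trans h1, g2, ?_⟩
    intro t' ht'
    rcases Finset.mem_insert.1 ht' with rfl | ht'
    · exact g3
    · rcases h3 t' ht' with h | h
      · exact Or.inl (acc_mono g1 h)
      · exact Or.inr (rej_mono g1 h)

lemma exists_chain {σ : Type*} (init : σ) (R : σ → σ → Prop) (h : ∀ p, ∃ q, R p q) :
    ∃ g : ℕ → σ, g 0 = init ∧ ∀ n, R (g n) (g (n + 1)) := by
  choose f hf using h
  exact ⟨fun n => Nat.rec init (fun _ ih => f ih) n, rfl, fun n => hf _⟩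

/-- index bound for a finite index set. -/
def Nv (v : Finset ℕ) : ℕ := if h : v.Nonempty then v.max' h + 1 else 0

lemma lt_Nv {v : Finset ℕ} {j : ℕ} (hj : j ∈ v) : j < Nv v := by
  rw [Nv, dif_pos ⟨j, hj⟩]
  exact Nat.lt_succ_of_le (Finset.le_max' v j hj)

theorem coreOpen (𝒪 : Set (Set ℕ)) (s₀ : Finset ℕ) (Zb : Set ℕ) (hZb : Zb.Infinite)
    (hab : above s₀ Zb)
    (hOpen : ∀ M ∈ 𝒪, M.Infinite → Init s₀ M → M ⊆ ↑s₀ ∪ Zb →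
      ∃ t, s₀ ⊆ t ∧ Init t M ∧ ebasic t M ⊆ 𝒪) :
    ∃ W ∈ ebasic s₀ (↑s₀ ∪ Zb), ebasic s₀ W ⊆ 𝒪 ∨ ebasic s₀ W ∩ 𝒪 = ∅ := by
  classical
  obtain ⟨Z0, hZ0b, hZ0inf, hdec0⟩ := decide (𝒪 := 𝒪) s₀ Zb hZb
  have hab0 : above s₀ Z0 := fun z hz => hab z (hZ0b hz)
  rcases hdec0 with hacc0 | hrej0
  · exact ⟨↑s₀ ∪ Z0, ⟨hZ0inf.mono subset_union_right, init_union hab0,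
      Set.union_subset_union_right _ hZ0b⟩, Or.inl hacc0⟩
  -- reject branch
  · -- phase 1 : a fusion sequence deciding all stems
    set Inv : Finset ℕ × Set ℕ → Prop := fun p =>
      p.2.Infinite ∧ p.2 ⊆ Z0 ∧ (∀ x' ∈ p.1, ∀ z ∈ p.2, x' < z) ∧
        (∀ u ⊆ p.1, acc 𝒪 (s₀ ∪ u) p.2 ∨ rej 𝒪 (s₀ ∪ u) p.2) with hInv
    have hinit : Inv (∅, Z0) := by
      refine ⟨hZ0inf, subset_rfl, by simp, ?_⟩
      intro u hu
      rw [Finset.subset_empty.1 hu, Finset.union_empty]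
      exact Or.inr hrej0
    have hstep : ∀ p : {p // Inv p}, ∃ q : {p // Inv p},
        ∃ x', x' ∈ p.val.2 ∧ q.val.1 = insert x' p.val.1 ∧
          q.val.2 ⊆ p.val.2 ∩ Set.Ioi x' := by
      rintro ⟨⟨xs, Z⟩, hZinf, hZ0, habv, hdecs⟩
      obtain ⟨x', hx'⟩ := hZinf.nonempty
      have hZ' : (Z ∩ Set.Ioi x').Infinite := inter_Ioi_infinite hZinf x'
      obtain ⟨Z'', h1, h2, h3⟩ :=
        decide_finset (𝒪 := 𝒪) ((insert x' xs).powerset.image (fun u => s₀ ∪ u)) _ hZ'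
      refine ⟨⟨(insert x' xs, Z''), h2, (h1.trans Set.inter_subset_left).trans hZ0,
        ?_, ?_⟩, x', hx', rfl, h1⟩
      · intro y hy z hz
        rcases Finset.mem_insert.1 hy with rfl | hy
        · exact (h1 hz).2
        · exact habv y hy z ((h1 hz).1)
      · intro u hu
        exact h3 _ (Finset.mem_image.2 ⟨u, Finset.mem_powerset.2 hu, rfl⟩)
    obtain ⟨g, hg0, hgR⟩ := exists_chain ⟨(∅, Z0), hinit⟩ _ hstep
    choose x hx1 hx2 hx3 using hgR
    set Zf : ℕ → Set ℕ := fun n => (g n).val.2 with hZfdef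
    set xsf : ℕ → Finset ℕ := fun n => (g n).val.1 with hxsfdef
    have hZf0 : Zf 0 = Z0 := by show (g 0).val.2 = Z0; rw [hg0]
    have hxsf0 : xsf 0 = ∅ := by show (g 0).val.1 = ∅; rw [hg0]
    have hZinf : ∀ n, (Zf n).Infinite := fun n => (g n).2.1
    have hZZ0 : ∀ n, Zf n ⊆ Z0 := fun n => (g n).2.2.1
    have hdecs : ∀ n, ∀ u ⊆ xsf n, acc 𝒪 (s₀ ∪ u) (Zf n) ∨ rej 𝒪 (s₀ ∪ u) (Zf n) :=
      fun n => (g n).2.2.2.2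
    have hZsucc : ∀ n, Zf (n + 1) ⊆ Zf n := fun n => (hx3 n).trans Set.inter_subset_left
    have hZmono : ∀ {i j}, i ≤ j → Zf j ⊆ Zf i := by
      intro i j hij
      induction j, hij using Nat.le_induction with
      | base => exact subset_rfl
      | succ j hij ih => exact (hZsucc j).trans ih
    have hxZ : ∀ n, x n ∈ Zf n := hx1
    have hxZf : ∀ {n i}, n ≤ i → x i ∈ Zf n := fun h => hZmono h (hxZ _)
    have hxmono : StrictMono x := strictMono_nat_of_lt_succ
      (fun n => ((hx3 n) (hxZ (n + 1))).2)
    have hxs_eq : ∀ n, xsf n = (Finset.range n).image x := by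
      intro n
      induction n with
      | zero => simp [hxsf0]
      | succ n ih => rw [show xsf (n+1) = insert (x n) (xsf n) from hx2 n, ih,
          Finset.range_add_one, Finset.image_insert]
    -- phase 2
    have phase2 : ∀ (v : Finset ℕ) (n : ℕ), (∀ j ∈ v, j < n) →
        rej 𝒪 (s₀ ∪ v.image x) (Zf n) →
        {i : ℕ | n ≤ i ∧ ¬ rej 𝒪 (insert (x i) (s₀ ∪ v.image x)) (Zf (i + 1))}.Finite := by
      intro v n hv hrej
      by_contra hfin
      rw [← Set.not_infinite, not_not] at hfin
      set t := s₀ ∪ v.image x with ht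
      set S := {i : ℕ | n ≤ i ∧ ¬ rej 𝒪 (insert (x i) t) (Zf (i + 1))} with hS
      have haccS : ∀ i ∈ S, acc 𝒪 (insert (x i) t) (Zf (i + 1)) := by
        intro i hi
        have hw : insert (x i) (v.image x) ⊆ xsf (i + 1) := by
          rw [hxs_eq]
          intro y hy
          rcases Finset.mem_insert.1 hy with rfl | hy
          · exact Finset.mem_image.2 ⟨i, Finset.mem_range.2 (Nat.lt_succ_self i), rfl⟩
          · obtain ⟨j, hj, rfl⟩ := Finset.mem_image.1 hy
            exact Finset.mem_image.2 ⟨j, Finset.mem_range.2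
              (lt_of_lt_of_le (hv j hj) (le_trans hi.1 (Nat.le_succ i))), rfl⟩
        rcases hdecs (i + 1) _ hw with h | h
        · rwa [Finset.union_insert] at h
        · rw [Finset.union_insert] at h
          exact absurd h hi.2
      set Y := x '' S with hY
      have hYinf : Y.Infinite := hfin.image (Set.injOn_of_injective hxmono.injective)
      have hYsub : Y ⊆ Zf n := by
        rintro _ ⟨i, hi, rfl⟩
        exact hxZf hi.1
      refine hrej Y hYsub hYinf ?_
      rintro M ⟨hMinf, hMinit, hMsub⟩
      have hne : (M \ ↑t).Nonempty := (diff_finset_infinite hMinf t).nonempty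
      set χ := sInf (M \ ↑t) with hχdef
      have hχ : χ ∈ M \ ↑t := Nat.sInf_mem hne
      have hχY : χ ∈ Y := by
        rcases hMsub hχ.1 with h | h
        · exact absurd h hχ.2
        · exact h
      obtain ⟨i₀, hi₀S, hχeq⟩ := hχY
      apply haccS i₀ hi₀S
      refine ⟨hMinf, ⟨?_, ?_⟩, ?_⟩
      · intro ζ hζ
        rcases Finset.mem_coe.1 hζ with hζ'
        rcases Finset.mem_insert.1 hζ' with rfl | hζ'
        · rw [hχeq]; exact hχ.1
        · exact hMinit.1 hζ'
      · intro ζ hζM hζn y hy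
        rcases Finset.mem_insert.1 hy with rfl | hy
        · have hζt : ζ ∉ (t : Set ℕ) := fun h => hζn (Finset.mem_insert.2 (Or.inr h))
          have hle : χ ≤ ζ := Nat.sInf_le ⟨hζM, hζt⟩
          have hne' : χ ≠ ζ := by
            rintro rfl
            apply hζn
            rw [← hχeq]
            exact Finset.mem_insert_self _ _
          rw [hχeq]
          exact lt_of_le_of_ne hle hne'
        · exact hMinit.2 ζ hζM (fun h => hζn (Finset.mem_insert.2 (Or.inr h))) y hy
      · intro ζ hζ
        by_cases hζt : ζ ∈ (t : Set ℕ)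
        · exact Or.inl (Finset.coe_subset.mpr (Finset.subset_insert _ _) hζt)
        · have hζY : ζ ∈ Y := by
            rcases hMsub hζ with h | h
            · exact absurd h hζt
            · exact h
          obtain ⟨i₁, hi₁S, rfl⟩ := hζY
          by_cases heq : x i₁ = χ
          · refine Or.inl ?_
            rw [heq, ← hχeq]
            exact_mod_cast Finset.mem_insert_self _ _
          · have hle : χ ≤ x i₁ := Nat.sInf_le ⟨hζ, hζt⟩
            have hlt : x i₀ < x i₁ := by
              rw [hχeq]
              exact lt_of_le_of_ne hle (Ne.symm heq)
            have : i₀ < i₁ := hxmono.lt_iff_lt.1 hlt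
            exact Or.inr (hxZf this)
      -- done phase2
    -- phase 3 : build a subsequence all of whose stems are rejected
    set Inv2 : Finset ℕ × ℕ → Prop := fun p =>
      (∀ j ∈ p.1, j < p.2) ∧
        ∀ v ⊆ p.1, rej 𝒪 (s₀ ∪ v.image x) (Zf (Nv v)) with hInv2
    have hinit2 : Inv2 (∅, 0) := by
      constructor
      · simp
      · intro v hv
        rw [Finset.subset_empty.1 hv]
        simp only [Finset.image_empty, Finset.union_empty, Nv, dif_neg Finset.not_nonempty_empty]
        rw [hZf0]
        exact hrej0
    have hstep2 : ∀ p : {p // Inv2 p}, ∃ q : {p // Inv2 p},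
        ∃ i, p.val.2 ≤ i ∧ q.val.1 = insert i p.val.1 ∧ q.val.2 = i + 1 := by
      rintro ⟨⟨J, N⟩, hJN, hJrej⟩
      have hbadfin : (⋃ v ∈ J.powerset,
          {i : ℕ | Nv v ≤ i ∧ ¬ rej 𝒪 (insert (x i) (s₀ ∪ v.image x)) (Zf (i + 1))}).Finite := by
        refine Set.Finite.biUnion J.powerset.finite_toSet ?_
        intro v hv
        exact phase2 v (Nv v) (fun j hj => lt_Nv hj) (hJrej v (Finset.mem_powerset.1 hv))
      obtain ⟨bnd, hbnd⟩ := hbadfin.bddAbove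
      set i₁ := max N (bnd + 1) with hi₁
      have hi₁N : N ≤ i₁ := le_max_left _ _
      have hi₁bnd : bnd < i₁ := lt_of_lt_of_le (Nat.lt_succ_self bnd) (le_max_right _ _)
      refine ⟨⟨(insert i₁ J, i₁ + 1), ?_, ?_⟩, i₁, hi₁N, rfl, rfl⟩
      · intro j hj
        rcases Finset.mem_insert.1 hj with rfl | hj
        · exact Nat.lt_succ_self _
        · exact lt_of_lt_of_le (hJN j hj) (le_trans hi₁N (Nat.le_succ _))
      · intro v' hv'
        by_cases hiv : i₁ ∈ v'
        · set v := v'.erase i₁ with hvdef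
          have hvJ : v ⊆ J := by
            intro j hj
            have hj' := Finset.mem_of_mem_erase hj
            rcases Finset.mem_insert.1 (hv' hj') with rfl | h
            · exact absurd (Finset.ne_of_mem_erase hj rfl) (fun h => h)
            · exact h
          have hvlt : ∀ j ∈ v, j < N := fun j hj => hJN j (hvJ hj)
          have hNvv : Nv v ≤ i₁ := by
            by_cases hv : v.Nonempty
            · rw [Nv, dif_pos hv]
              exact le_trans (Nat.succ_le_of_lt (hJN _ (hvJ (v.max'_mem hv)))) hi₁N
            · rw [Nv, dif_neg hv]; exact Nat.zero_le _
          have hnotbad : i₁ ∉ {i : ℕ | Nv v ≤ i ∧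
              ¬ rej 𝒪 (insert (x i) (s₀ ∪ v.image x)) (Zf (i + 1))} := by
            intro hmem
            exact absurd (hbnd (Set.mem_biUnion (Finset.mem_powerset.2 hvJ) hmem))
              (not_le.2 hi₁bnd)
          have hrejv : rej 𝒪 (insert (x i₁) (s₀ ∪ v.image x)) (Zf (i₁ + 1)) := by
            by_contra hcon
            exact hnotbad ⟨hNvv, hcon⟩
          have hv'v : v' = insert i₁ v := (Finset.insert_erase hiv).symm
          have himg : v'.image x = insert (x i₁) (v.image x) := by
            rw [hv'v, Finset.image_insert]
          have hNvv' : Nv v' = i₁ + 1 := by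
            have hne : v'.Nonempty := ⟨i₁, hiv⟩
            rw [Nv, dif_pos hne]
            congr 1
            refine le_antisymm (Finset.max'_le _ _ _ ?_) (Finset.le_max' _ _ hiv)
            intro j hj
            rcases Finset.mem_insert.1 (hv' hj) with rfl | hj'
            · exact le_rfl
            · exact le_trans (le_of_lt (hJN j hj')) hi₁N
          rw [himg, hNvv', Finset.union_insert]
          exact hrejv
        · have hv'J : v' ⊆ J := by
            intro j hj
            rcases Finset.mem_insert.1 (hv' hj) with rfl | h
            · exact absurd hj hiv
            · exact h
          exact hJrej v' hv'J
    obtain ⟨g2, hg20, hg2R⟩ := exists_chain ⟨(∅, 0), hinit2⟩ _ hstep2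
    choose istar hi1 hi2 hi3 using hg2R
    set Jf : ℕ → Finset ℕ := fun m => (g2 m).val.1 with hJfdef
    set Nf : ℕ → ℕ := fun m => (g2 m).val.2 with hNfdef
    have hJf0 : Jf 0 = ∅ := by show (g2 0).val.1 = ∅; rw [hg20]
    have hJsucc : ∀ m, Jf (m + 1) = insert (istar m) (Jf m) := hi2
    have hNsucc : ∀ m, Nf (m + 1) = istar m + 1 := hi3
    have hNle : ∀ m, Nf m ≤ istar m := hi1
    have hJlt : ∀ m, ∀ j ∈ Jf m, j < Nf m := fun m => (g2 m).2.1
    have hJrej : ∀ m, ∀ v ⊆ Jf m, rej 𝒪 (s₀ ∪ v.image x) (Zf (Nv v)) :=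
      fun m => (g2 m).2.2
    have hJmono : ∀ {m m'}, m ≤ m' → Jf m ⊆ Jf m' := by
      intro m m' h
      induction m', h using Nat.le_induction with
      | base => exact subset_rfl
      | succ m' h ih => rw [hJsucc m']; exact ih.trans (Finset.subset_insert _ _)
    have histar_mem : ∀ m, istar m ∈ Jf (m + 1) := by
      intro m; rw [hJsucc]; exact Finset.mem_insert_self _ _
    have histar_mono : StrictMono istar := strictMono_nat_of_lt_succ (by
      intro m
      have h1 : istar m + 1 = Nf (m + 1) := (hNsucc m).symm
      have h2 : Nf (m + 1) ≤ istar (m + 1) := hNle (m + 1)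
      omega)
    set Iinf : Set ℕ := {j | ∃ m, j ∈ Jf m} with hIinf
    have hIinfinf : Iinf.Infinite :=
      Set.infinite_of_injective_forall_mem histar_mono.injective
        (fun m => ⟨m + 1, histar_mem m⟩)
    set Wset : Set ℕ := x '' Iinf with hWset
    have hWinf : Wset.Infinite := hIinfinf.image (Set.injOn_of_injective hxmono.injective)
    have hWZ0 : Wset ⊆ Z0 := by
      rintro _ ⟨j, _, rfl⟩
      exact hZZ0 j (hxZ j)
    have habW : above s₀ Wset := fun z hz => hab0 z (hWZ0 hz)
    refine ⟨↑s₀ ∪ Wset, ⟨hWinf.mono subset_union_right, init_union habW,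
      Set.union_subset_union_right _ (hWZ0.trans hZ0b)⟩, Or.inr ?_⟩
    rw [Set.eq_empty_iff_forall_notMem]
    rintro M ⟨⟨hMinf, hMinit, hMsub⟩, hMO⟩
    obtain ⟨t, hst, htM, htO⟩ := hOpen M hMO hMinf hMinit
      (hMsub.trans (Set.union_subset_union_right _ (hWZ0.trans hZ0b)))
    have htu : s₀ ∪ t \ s₀ = t := Finset.union_sdiff_of_subset hst
    have hu : ∀ ζ ∈ t \ s₀, (ζ : ℕ) ∈ Wset := by
      intro ζ hζ
      have hζM : (ζ : ℕ) ∈ M := htM.1 (Finset.mem_coe.2 (Finset.sdiff_subset hζ))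
      rcases hMsub hζM with h | h
      · exact absurd (Finset.mem_coe.1 h) (Finset.mem_sdiff.1 hζ).2
      · exact h
    have hmem : ∀ ζ ∈ t \ s₀, ∃ m j, j ∈ Jf m ∧ (ζ : ℕ) = x j := by
      intro ζ hζ
      obtain ⟨j, hjI, hji⟩ := hu ζ hζ
      obtain ⟨m, hm⟩ := hjI
      exact ⟨m, j, hm, hji.symm⟩
    choose! mfn jfn hmj using hmem
    set m₀ := (t \ s₀).sup mfn with hm₀
    have hm : ∀ ζ ∈ t \ s₀, ∃ j ∈ Jf m₀, (ζ : ℕ) = x j := by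
      intro ζ hζ
      exact ⟨jfn ζ, hJmono (Finset.le_sup hζ) (hmj ζ hζ).1, (hmj ζ hζ).2⟩
    set v := (Jf m₀).filter (fun j => x j ∈ t \ s₀) with hv
    have himg : v.image x = t \ s₀ := by
      apply Finset.Subset.antisymm
      · intro y hy
        obtain ⟨j, hj, rfl⟩ := Finset.mem_image.1 hy
        exact (Finset.mem_filter.1 hj).2
      · intro ζ hζ
        obtain ⟨j, hjJ, hji⟩ := hm ζ hζ
        refine Finset.mem_image.2 ⟨j, Finset.mem_filter.2 ⟨hjJ, ?_⟩, hji.symm⟩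
        rw [← hji]; exact hζ
    have hrejv := hJrej m₀ v (Finset.filter_subset _ _)
    rw [himg, htu] at hrejv
    have haccM : acc 𝒪 t (M \ ↑t) := by
      intro M' hM'
      apply htO
      rwa [Set.union_diff_cancel htM.1] at hM'
    refine hrejv (M \ ↑t) ?_ (diff_finset_infinite hMinf t) haccM
    intro ζ hζ
    have hζW : ζ ∈ Wset := by
      rcases hMsub hζ.1 with h | h
      · exact absurd (Finset.mem_coe.2 (hst (Finset.mem_coe.1 h))) hζ.2
      · exact h
    obtain ⟨j, hjI, rfl⟩ := hζW
    by_cases hvne : v.Nonempty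
    · have hNvv : Nv v = v.max' hvne + 1 := by rw [Nv, dif_pos hvne]
      set jm := v.max' hvne with hjm
      have hjm_u : x jm ∈ t \ s₀ := (Finset.mem_filter.1 (v.max'_mem hvne)).2
      have hjm_t : x jm ∈ t := Finset.sdiff_subset hjm_u
      have hlt : x jm < x j := htM.2 (x j) hζ.1 (fun h => hζ.2 (Finset.mem_coe.2 h)) (x jm) hjm_t
      have hjj : jm < j := hxmono.lt_iff_lt.1 hlt
      rw [hNvv]
      exact hZmono (Nat.succ_le_of_lt hjj) (hxZ j)
    · rw [Nv, dif_neg hvne, hZf0]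
      exact hZZ0 j (hxZ j)

end PolyCore


namespace PolyCore

lemma hopen_lift {𝒪 : Set (Set ℕ)} {s₀ t : Finset ℕ} {Zb Z : Set ℕ}
    (hOpen : ∀ M ∈ 𝒪, M.Infinite → Init s₀ M → M ⊆ ↑s₀ ∪ Zb →
      ∃ t', s₀ ⊆ t' ∧ Init t' M ∧ ebasic t' M ⊆ 𝒪)
    (hst : s₀ ⊆ t) (htab : ∀ x ∈ t, x ∉ s₀ → ∀ y ∈ s₀, y < x)
    (hsub : ↑t ∪ Z ⊆ ↑s₀ ∪ Zb) :
    ∀ M ∈ 𝒪, M.Infinite → Init t M → M ⊆ ↑t ∪ Z →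
      ∃ t', t ⊆ t' ∧ Init t' M ∧ ebasic t' M ⊆ 𝒪 := by
  intro M hMO hMinf hMt hMsub
  have hs₀M : Init s₀ M := init_of_initF ⟨hst, htab⟩ hMt
  obtain ⟨t', h1, h2, h3⟩ := hOpen M hMO hMinf hs₀M (hMsub.trans hsub)
  rcases init_comparable h2 hMt with hc | hc
  · exact ⟨t, subset_rfl, hMt,
      fun M' hM' => h3 (ebasic_stem_mono (init_initF h2 hMt hc) hM')⟩
  · exact ⟨t', hc, h2, h3⟩

lemma shrink_finset (𝒰 : ℕ → Set (Set ℕ)) (s₀ : Finset ℕ) (Zb : Set ℕ)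
    (hOpen : ∀ i, ∀ M ∈ 𝒰 i, M.Infinite → Init s₀ M → M ⊆ ↑s₀ ∪ Zb →
      ∃ t, s₀ ⊆ t ∧ Init t M ∧ ebasic t M ⊆ 𝒰 i)
    (hDense : ∀ i (t : Finset ℕ) (Z : Set ℕ), s₀ ⊆ t → above t Z → Z.Infinite →
      ↑t ∪ Z ⊆ ↑s₀ ∪ Zb → ∃ M, M ∈ 𝒰 i ∧ M ∈ ebasic t (↑t ∪ Z))
    (T : Finset (Finset ℕ × ℕ)) :
    ∀ (Z : Set ℕ), Z.Infinite → Z ⊆ Zb →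
      (∀ p ∈ T, s₀ ⊆ p.1 ∧ (∀ x ∈ p.1, x ∉ s₀ → ∀ y ∈ s₀, y < x) ∧ above p.1 Z ∧
        (∀ x ∈ p.1, x ∉ s₀ → x ∈ Zb)) →
      ∃ Z', Z' ⊆ Z ∧ Z'.Infinite ∧ ∀ p ∈ T, ebasic p.1 (↑p.1 ∪ Z') ⊆ 𝒰 p.2 := by
  classical
  induction T using Finset.induction_on with
  | empty => exact fun Z hZ _ _ => ⟨Z, subset_rfl, hZ, by simp⟩
  | insert _ _ hnotmem ih =>
    rename_i q T'
    intro Z hZinf hZZb hcond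
    obtain ⟨Z₁, h1, h2, h3⟩ := ih Z hZinf hZZb
      (fun p hp => hcond p (Finset.mem_insert_of_mem hp))
    obtain ⟨hq1, hq2, hq3, hq4⟩ := hcond q (Finset.mem_insert_self _ _)
    have habZ₁ : above q.1 Z₁ := fun z hz => hq3 z (h1 hz)
    have hsubq : (↑q.1 : Set ℕ) ∪ Z₁ ⊆ ↑s₀ ∪ Zb := by
      apply Set.union_subset
      · intro ζ hζ
        by_cases hζs : ζ ∈ s₀
        · exact Or.inl hζs
        · -- q.1's extra elements: need them in Zb?  use: they are in s₀ ∪ Zb?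
          exact Or.inr (hq4 ζ hζ hζs)
      · exact fun z hz => Or.inr (hZZb (h1 hz))
    obtain ⟨W, hWmem, hWcase⟩ := coreOpen (𝒰 q.2) q.1 Z₁ h2 habZ₁
      (hopen_lift (hOpen q.2) hq1 hq2 hsubq)
    obtain ⟨hWinf, hWinit, hWsub⟩ := hWmem
    have hdiffinf : (W \ ↑q.1).Infinite := diff_finset_infinite hWinf _
    have hWeq : ↑q.1 ∪ (W \ ↑q.1) = W := Set.union_diff_cancel hWinit.1
    have hcase : ebasic q.1 W ⊆ 𝒰 q.2 := by
      rcases hWcase with h | h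
      · exact h
      · exfalso
        obtain ⟨M, hM1, hM2⟩ := hDense q.2 q.1 (W \ ↑q.1) hq1 (init_above hWinit)
          hdiffinf (by rw [hWeq]; exact hWsub.trans hsubq)
        rw [hWeq] at hM2
        rw [Set.eq_empty_iff_forall_notMem] at h
        exact h M ⟨hM2, hM1⟩
    refine ⟨W \ ↑q.1, ?_, hdiffinf, ?_⟩
    · intro z hz
      have := hWsub hz.1
      rcases this with h | h
      · exact absurd h hz.2
      · exact h1 h
    · intro p hp
      rcases Finset.mem_insert.1 hp with rfl | hp
      · rw [hWeq]
        exact hcase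
      · refine (ebasic_mono ?_).trans (h3 p hp)
        apply Set.union_subset_union_right
        intro z hz
        have := hWsub hz.1
        rcases this with h | h
        · exact absurd h hz.2
        · exact h

end PolyCore


namespace PolyCore

theorem coreMeagre (𝒰 : ℕ → Set (Set ℕ)) (s₀ : Finset ℕ) (Zb : Set ℕ)
    (hZb : Zb.Infinite) (hab : above s₀ Zb)
    (hOpen : ∀ i, ∀ M ∈ 𝒰 i, M.Infinite → Init s₀ M → M ⊆ ↑s₀ ∪ Zb →
      ∃ t, s₀ ⊆ t ∧ Init t M ∧ ebasic t M ⊆ 𝒰 i)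
    (hDense : ∀ i (t : Finset ℕ) (Z : Set ℕ), s₀ ⊆ t → above t Z → Z.Infinite →
      ↑t ∪ Z ⊆ ↑s₀ ∪ Zb → ∃ M, M ∈ 𝒰 i ∧ M ∈ ebasic t (↑t ∪ Z)) :
    ∃ W ∈ ebasic s₀ (↑s₀ ∪ Zb), ∀ M ∈ ebasic s₀ W, ∀ i, M ∈ 𝒰 i := by
  classical
  set Inv : ℕ × Finset ℕ × Set ℕ → Prop := fun p =>
    p.2.2.Infinite ∧ p.2.2 ⊆ Zb ∧ (∀ x ∈ p.2.1, x ∈ Zb) ∧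
      (∀ x ∈ p.2.1, ∀ z ∈ p.2.2, x < z) ∧
      (∀ u ⊆ p.2.1, ∀ i < p.1, ebasic (s₀ ∪ u) (↑(s₀ ∪ u) ∪ p.2.2) ⊆ 𝒰 i) with hInv
  have hinit : Inv (0, ∅, Zb) := by
    refine ⟨hZb, subset_rfl, by simp, by simp, ?_⟩
    intro u _ i hi
    omega
  have hstep : ∀ p : {p // Inv p}, ∃ q : {p // Inv p},
      q.val.1 = p.val.1 + 1 ∧ ∃ x', x' ∈ p.val.2.2 ∧
        q.val.2.1 = insert x' p.val.2.1 ∧ q.val.2.2 ⊆ p.val.2.2 ∩ Set.Ioi x' := by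
    rintro ⟨⟨m, xs, Z⟩, hZinf, hZZb, hxsZb, habv, hguar⟩
    obtain ⟨xnew, hxnew⟩ := hZinf.nonempty
    have hZ1 : (Z ∩ Set.Ioi xnew).Infinite := inter_Ioi_infinite hZinf xnew
    set xs' := insert xnew xs with hxs'
    have hxs'Zb : ∀ x ∈ xs', x ∈ Zb := by
      intro y hy
      rcases Finset.mem_insert.1 hy with rfl | hy
      · exact hZZb hxnew
      · exact hxsZb y hy
    set T := (xs'.powerset ×ˢ Finset.range (m + 1)).image
      (fun q => (s₀ ∪ q.1, q.2)) with hT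
    have hcond : ∀ p ∈ T, s₀ ⊆ p.1 ∧ (∀ x ∈ p.1, x ∉ s₀ → ∀ y ∈ s₀, y < x) ∧
        above p.1 (Z ∩ Set.Ioi xnew) ∧ (∀ x ∈ p.1, x ∉ s₀ → x ∈ Zb) := by
      intro p hp
      obtain ⟨⟨u, i⟩, hq, rfl⟩ := Finset.mem_image.1 hp
      have hu : u ⊆ xs' := Finset.mem_powerset.1 (Finset.mem_product.1 hq).1
      have huZb : ∀ x ∈ u, x ∈ Zb := fun y hy => hxs'Zb y (hu hy)
      refine ⟨Finset.subset_union_left, ?_, ?_, ?_⟩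
      · intro y hy hys z hz
        rcases Finset.mem_union.1 hy with hy | hy
        · exact absurd hy hys
        · exact hab y (huZb y hy) z hz
      · intro z hz y hy
        rcases Finset.mem_union.1 hy with hy | hy
        · exact hab z (hZZb hz.1) y hy
        · rcases Finset.mem_insert.1 (hu hy) with rfl | hy'
          · exact hz.2
          · exact habv y hy' z hz.1
      · intro y hy hys
        rcases Finset.mem_union.1 hy with hy | hy
        · exact absurd hy hys
        · exact huZb y hy
    obtain ⟨Z'', h1, h2, h3⟩ := shrink_finset 𝒰 s₀ Zb hOpen hDense T
      (Z ∩ Set.Ioi xnew) hZ1 (Set.inter_subset_left.trans hZZb) hcond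
    refine ⟨⟨(m + 1, xs', Z''), h2, h1.trans (Set.inter_subset_left.trans hZZb),
      hxs'Zb, ?_, ?_⟩, rfl, xnew, hxnew, rfl, h1⟩
    · intro y hy z hz
      rcases Finset.mem_insert.1 hy with rfl | hy
      · exact (h1 hz).2
      · exact habv y hy z ((h1 hz).1)
    · intro u hu i hi
      exact h3 (s₀ ∪ u, i) (Finset.mem_image.2 ⟨(u, i), Finset.mem_product.2
        ⟨Finset.mem_powerset.2 hu, Finset.mem_range.2 hi⟩, rfl⟩)
  obtain ⟨g, hg0, hgR⟩ := exists_chain ⟨(0, ∅, Zb), hinit⟩ _ hstep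
  have hstage : ∀ n, (g n).val.1 = n := by
    intro n
    induction n with
    | zero => rw [hg0]
    | succ n ih => rw [(hgR n).1, ih]
  choose x hx1 hx2 hx3 using fun n => (hgR n).2
  set Zf : ℕ → Set ℕ := fun n => (g n).val.2.2 with hZfdef
  set xsf : ℕ → Finset ℕ := fun n => (g n).val.2.1 with hxsfdef
  have hxsf0 : xsf 0 = ∅ := by show (g 0).val.2.1 = ∅; rw [hg0]
  have hZinf : ∀ n, (Zf n).Infinite := fun n => (g n).2.1
  have hZZb : ∀ n, Zf n ⊆ Zb := fun n => (g n).2.2.1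
  have hguar : ∀ n, ∀ u ⊆ xsf n, ∀ i < n, ebasic (s₀ ∪ u) (↑(s₀ ∪ u) ∪ Zf n) ⊆ 𝒰 i := by
    intro n
    have := (g n).2.2.2.2.2
    rwa [hstage n] at this
  have hZsucc : ∀ n, Zf (n + 1) ⊆ Zf n := fun n => (hx3 n).trans Set.inter_subset_left
  have hZmono : ∀ {i j}, i ≤ j → Zf j ⊆ Zf i := by
    intro i j hij
    induction j, hij using Nat.le_induction with
    | base => exact subset_rfl
    | succ j hij ih => exact (hZsucc j).trans ih
  have hxZ : ∀ n, x n ∈ Zf n := hx1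
  have hxZf : ∀ {n i}, n ≤ i → x i ∈ Zf n := fun h => hZmono h (hxZ _)
  have hxZb : ∀ n, x n ∈ Zb := fun n => hZZb n (hxZ n)
  have hxmono : StrictMono x := strictMono_nat_of_lt_succ
    (fun n => ((hx3 n) (hxZ (n + 1))).2)
  have hxs_eq : ∀ n, xsf n = (Finset.range n).image x := by
    intro n
    induction n with
    | zero => simp [hxsf0]
    | succ n ih => rw [show xsf (n+1) = insert (x n) (xsf n) from hx2 n, ih,
        Finset.range_add_one, Finset.image_insert]
  set Wset : Set ℕ := Set.range x with hWsetdef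
  have hWinf : Wset.Infinite := Set.infinite_range_of_injective hxmono.injective
  have hWZb : Wset ⊆ Zb := by rintro _ ⟨n, rfl⟩; exact hxZb n
  have habW : above s₀ Wset := fun z hz => hab z (hWZb hz)
  refine ⟨↑s₀ ∪ Wset, ⟨hWinf.mono subset_union_right, init_union habW,
    Set.union_subset_union_right _ hWZb⟩, ?_⟩
  rintro M ⟨hMinf, hMinit, hMsub⟩ i
  set n := i + 1 with hn
  set u := (xsf n).filter (fun y => y ∈ M) with hu
  have husub : u ⊆ xsf n := Finset.filter_subset _ _
  apply hguar n u husub i (Nat.lt_succ_self i)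
  have huM : ∀ y ∈ u, (y : ℕ) ∈ M := fun y hy => (Finset.mem_filter.1 hy).2
  refine ⟨hMinf, ⟨?_, ?_⟩, ?_⟩
  · intro ζ hζ
    rcases Finset.mem_union.1 (Finset.mem_coe.1 hζ) with h | h
    · exact hMinit.1 (Finset.mem_coe.2 h)
    · exact huM ζ h
  · intro ζ hζM hζn y hy
    have hζs₀ : ζ ∉ s₀ := fun h => hζn (Finset.mem_union.2 (Or.inl h))
    have hζW : ζ ∈ Wset := by
      rcases hMsub hζM with h | h
      · exact absurd (Finset.mem_coe.1 h) hζs₀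
      · exact h
    obtain ⟨j, rfl⟩ := hζW
    have hjn : n ≤ j := by
      by_contra hjn
      push_neg at hjn
      apply hζn
      refine Finset.mem_union.2 (Or.inr (Finset.mem_filter.2 ⟨?_, hζM⟩))
      rw [hxs_eq]
      exact Finset.mem_image.2 ⟨j, Finset.mem_range.2 hjn, rfl⟩
    rcases Finset.mem_union.1 hy with hy | hy
    · exact hab (x j) (hxZb j) y hy
    · have := husub hy
      rw [hxs_eq] at this
      obtain ⟨j', hj', rfl⟩ := Finset.mem_image.1 this
      exact hxmono (lt_of_lt_of_le (Finset.mem_range.1 hj') hjn)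
  · intro ζ hζ
    by_cases hζs₀ : ζ ∈ s₀
    · exact Or.inl (Finset.mem_coe.2 (Finset.mem_union.2 (Or.inl hζs₀)))
    · have hζW : ζ ∈ Wset := by
        rcases hMsub hζ with h | h
        · exact absurd (Finset.mem_coe.1 h) hζs₀
        · exact h
      obtain ⟨j, rfl⟩ := hζW
      by_cases hjn : j < n
      · refine Or.inl (Finset.mem_coe.2 (Finset.mem_union.2 (Or.inr
          (Finset.mem_filter.2 ⟨?_, hζ⟩))))
        rw [hxs_eq]
        exact Finset.mem_image.2 ⟨j, Finset.mem_range.2 hjn, rfl⟩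
      · exact Or.inr (hxZf (not_lt.1 hjn))

end PolyCore


namespace PolyCore

/-- the singletons from `X`. -/
def sing (X : Set ℕ) : Set (Finset ℕ) := {u | ∃ v ∈ X, u = {v}}

/-- the minimal polyhedron pair over vertex set `M` with fixed stem faces `F`. -/
def cube (F : Set (Finset ℕ)) (M : Set ℕ) : PPair := (M, F ∪ sing M)

/-- the stem approximation pair. -/
def stemPair (F : Set (Finset ℕ)) (t : Finset ℕ) : PPair := ((↑t : Set ℕ), F ∪ sing ↑t)

lemma sing_mono {M M' : Set ℕ} (h : M ⊆ M') : sing M ⊆ sing M' := by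
  rintro _ ⟨v, hv, rfl⟩
  exact ⟨v, h hv, rfl⟩

lemma approx_def (m : ℕ) (P : PPair) :
    approx m P = (↑(vrestrict P.1 m), frestrict P.2 (vrestrict P.1 m)) := rfl

lemma frestrict_union (S T : Set (Finset ℕ)) (c : Finset ℕ) :
    frestrict (S ∪ T) c = frestrict S c ∪ frestrict T c := Set.image_union _ _ _

lemma cube_hered {F : Set (Finset ℕ)} (hFh : Hereditary F) (hF0 : ∅ ∈ F) (M : Set ℕ) :
    Hereditary (F ∪ sing M) := by
  rintro u v huv (hv | ⟨w, hw, rfl⟩)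
  · exact Or.inl (hFh u v huv hv)
  · rcases Finset.subset_singleton_iff.1 huv with rfl | rfl
    · exact Or.inl hF0
    · exact Or.inr ⟨w, hw, rfl⟩

lemma cube_infpoly {k : ℕ} (hk : 0 < k) {F : Set (Finset ℕ)} {b : Finset ℕ}
    (hFb : ∀ u ∈ F, u ⊆ b) (hFh : Hereditary F) (hF0 : ∅ ∈ F)
    (hFk : ∀ u ∈ F, u.card ≤ k) {M : Set ℕ} (hM : M.Infinite) (hbM : ↑b ⊆ M) :
    InfPoly (cube F M) ∧ ∀ u ∈ (cube F M).2, u.card ≤ k := by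
  refine ⟨⟨⟨?_, cube_hered hFh hF0 M, ?_⟩, hM⟩, ?_⟩
  · rintro u (hu | ⟨v, hv, rfl⟩)
    · exact fun y hy => hbM (Finset.coe_subset.2 (hFb u hu) hy)
    · intro y hy
      rw [Finset.coe_singleton, Set.mem_singleton_iff] at hy
      rw [hy]; exact hv
  · intro v hv
    exact ⟨{v}, Or.inr ⟨v, hv, rfl⟩, Finset.mem_singleton_self v⟩
  · rintro u (hu | ⟨v, _, rfl⟩)
    · exact hFk u hu
    · simpa using Nat.one_le_of_lt hk

lemma fr_fixed {F : Set (Finset ℕ)} {c : Finset ℕ} (hFc : ∀ u ∈ F, u ⊆ c) :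
    frestrict F c = F := by
  ext u
  simp only [frestrict, Set.mem_image]
  constructor
  · rintro ⟨w, hw, rfl⟩
    rwa [Finset.inter_eq_left.2 (hFc w hw)]
  · intro hu
    exact ⟨u, hu, Finset.inter_eq_left.2 (hFc u hu)⟩

lemma fr_sing {c : Finset ℕ} {M : Set ℕ} (hcM : ↑c ⊆ M) (hex : ∃ x ∈ M, x ∉ c) :
    frestrict (sing M) c = sing ↑c ∪ {∅} := by
  ext u
  simp only [frestrict, Set.mem_image]
  constructor
  · rintro ⟨_, ⟨v, hv, rfl⟩, rfl⟩
    by_cases hvc : v ∈ c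
    · rw [Finset.singleton_inter_of_mem hvc]
      exact Or.inl ⟨v, hvc, rfl⟩
    · rw [Finset.singleton_inter_of_notMem hvc]
      exact Or.inr rfl
  · rintro (⟨v, hv, rfl⟩ | rfl)
    · exact ⟨{v}, ⟨v, hcM hv, rfl⟩, Finset.singleton_inter_of_mem hv⟩
    · obtain ⟨x, hx, hxc⟩ := hex
      exact ⟨{x}, ⟨x, hx, rfl⟩, Finset.singleton_inter_of_notMem hxc⟩

lemma union_sing_empty {F : Set (Finset ℕ)} (h0 : ∅ ∈ F) (s : Set (Finset ℕ)) :
    F ∪ (s ∪ {∅}) = F ∪ s := by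
  ext u
  constructor
  · rintro (h | h | rfl)
    · exact Or.inl h
    · exact Or.inr h
    · exact Or.inl h0
  · rintro (h | h)
    · exact Or.inl h
    · exact Or.inr (Or.inl h)

lemma approx_cube_eq {F : Set (Finset ℕ)} (hF0 : ∅ ∈ F) {M : Set ℕ} {t : Finset ℕ}
    (hM : M.Infinite) (ht : Init t M) (hFt : ∀ u ∈ F, u ⊆ t) :
    approx t.card (cube F M) = stemPair F t := by
  have hvr : vrestrict M t.card = t := vr_eq_of_init hM ht
  have hex : ∃ x ∈ M, x ∉ t := by
    obtain ⟨x, hx⟩ := (diff_finset_infinite hM t).nonempty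
    exact ⟨x, hx.1, fun h => hx.2 (Finset.mem_coe.2 h)⟩
  rw [approx_def]
  show (↑(vrestrict M t.card), frestrict (F ∪ sing M) (vrestrict M t.card)) = stemPair F t
  rw [hvr, frestrict_union, fr_fixed hFt, fr_sing ht.1 hex, union_sing_empty hF0]
  rfl

lemma approx_cube_agree {F : Set (Finset ℕ)} {N N' : Set ℕ} {t : Finset ℕ} {m : ℕ}
    (hN : N.Infinite) (hN' : N'.Infinite) (ht : Init t N) (ht' : Init t N')
    (hm : m ≤ t.card) :
    approx m (cube F N') = approx m (cube F N) := by
  have hagree : vrestrict N' m = vrestrict N m := vr_agree hN hN' ht ht' hm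
  have hcN : ↑(vrestrict N m) ⊆ N := vr_subset hN m
  have hcN' : ↑(vrestrict N m) ⊆ N' := by
    rw [← hagree]; exact vr_subset hN' m
  have hexN : ∃ x ∈ N, x ∉ vrestrict N m := by
    obtain ⟨x, hx⟩ := (diff_finset_infinite hN (vrestrict N m)).nonempty
    exact ⟨x, hx.1, fun h => hx.2 (Finset.mem_coe.2 h)⟩
  have hexN' : ∃ x ∈ N', x ∉ vrestrict N m := by
    obtain ⟨x, hx⟩ := (diff_finset_infinite hN' (vrestrict N m)).nonempty
    exact ⟨x, hx.1, fun h => hx.2 (Finset.mem_coe.2 h)⟩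
  rw [approx_def, approx_def]
  show ((↑(vrestrict N' m) : Set ℕ), frestrict (F ∪ sing N') (vrestrict N' m))
    = ((↑(vrestrict N m) : Set ℕ), frestrict (F ∪ sing N) (vrestrict N m))
  rw [hagree, frestrict_union, frestrict_union, fr_sing hcN' hexN', fr_sing hcN hexN]

lemma stem_finpoly {k : ℕ} (hk : 0 < k) {F : Set (Finset ℕ)} {b : Finset ℕ}
    (hFb : ∀ u ∈ F, u ⊆ b) (hFh : Hereditary F) (hF0 : ∅ ∈ F)
    (hFk : ∀ u ∈ F, u.card ≤ k) {t : Finset ℕ} (hbt : b ⊆ t) :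
    FinPoly (stemPair F t) ∧ ∀ u ∈ (stemPair F t).2, u.card ≤ k := by
  refine ⟨⟨⟨?_, cube_hered hFh hF0 _, ?_⟩, t.finite_toSet⟩, ?_⟩
  · rintro u (hu | ⟨v, hv, rfl⟩)
    · exact fun y hy => Finset.mem_coe.2 (hbt ((hFb u hu) (Finset.mem_coe.1 hy)))
    · intro y hy
      rw [Finset.coe_singleton, Set.mem_singleton_iff] at hy
      rw [hy]; exact hv
  · intro v hv
    exact ⟨{v}, Or.inr ⟨v, hv, rfl⟩, Finset.mem_singleton_self v⟩
  · rintro u (hu | ⟨v, _, rfl⟩)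
    · exact hFk u hu
    · simpa using Nat.one_le_of_lt hk

lemma knbhd_cube {k : ℕ} {F : Set (Finset ℕ)} {b : Finset ℕ}
    (hFb : ∀ u ∈ F, u ⊆ b) (hF0 : ∅ ∈ F) {t : Finset ℕ} (hbt : b ⊆ t) {M : Set ℕ}
    (BM : PolyK k) (hBM : BM.1 = cube F M) :
    knbhd k (stemPair F t) BM =
      {C : PolyK k | ∃ N, N.Infinite ∧ Init t N ∧ N ⊆ M ∧ C.1 = cube F N} := by
  ext C
  constructor
  · rintro ⟨hple, m, happrox⟩
    rw [hBM] at hple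
    have hNM : C.1.1 ⊆ M := hple.1
    have hNinf : C.1.1.Infinite := C.2.1.2
    have hfst : (↑(vrestrict C.1.1 m) : Set ℕ) = ↑t := congrArg Prod.fst happrox
    have hvr : vrestrict C.1.1 m = t := Finset.coe_injective hfst
    have hInit : Init t C.1.1 := by rw [← hvr]; exact vr_init hNinf m
    have hsnd : frestrict C.1.2 t = F ∪ sing ↑t := by
      have h2 := congrArg Prod.snd happrox
      rwa [show (approx m C.1).2 = frestrict C.1.2 (vrestrict C.1.1 m) from rfl, hvr] at h2
    have hCpoly : IsPolyPair C.1 := C.2.1.1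
    have hsingN : sing C.1.1 ⊆ C.1.2 := by
      rintro _ ⟨v, hv, rfl⟩
      obtain ⟨u, hu, hvu⟩ := hCpoly.2.2 v hv
      exact hCpoly.2.1 {v} u (Finset.singleton_subset_iff.2 hvu) hu
    have hFC : F ⊆ C.1.2 := by
      intro u hu
      have hmem : u ∈ frestrict C.1.2 t := hsnd.symm ▸ Or.inl hu
      obtain ⟨w, hw, rfl⟩ := hmem
      exact hCpoly.2.1 _ w Finset.inter_subset_left hw
    have hfaces : C.1.2 = F ∪ sing C.1.1 := by
      apply Set.Subset.antisymm
      · intro w hw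
        rcases hple.2 hw with h | h
        · exact Or.inl h
        · obtain ⟨v, hv, rfl⟩ := h
          refine Or.inr ⟨v, ?_, rfl⟩
          have hvsub := hCpoly.1 {v} hw
          exact hvsub (Finset.mem_coe.2 (Finset.mem_singleton_self v))
      · exact Set.union_subset hFC hsingN
    refine ⟨C.1.1, hNinf, hInit, hNM, ?_⟩
    show C.1 = (C.1.1, F ∪ sing C.1.1)
    rw [← hfaces]
  · rintro ⟨N, hNinf, hNt, hNM, hCN⟩
    refine ⟨?_, t.card, ?_⟩
    · rw [hCN, hBM]
      exact ⟨hNM, Set.union_subset_union_right _ (sing_mono hNM)⟩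
    · rw [hCN]
      exact approx_cube_eq hF0 hNinf hNt (fun u hu => (hFb u hu).trans hbt)

end PolyCore


namespace PolyCore

lemma open_transfer {k : ℕ} {F : Set (Finset ℕ)} {b : Finset ℕ}
    (hFb : ∀ u ∈ F, u ⊆ b) {U : Set (PolyK k)}
    (hU : TopologicalSpace.GenerateOpen
      {s | ∃ a A, FinPoly a ∧ (∀ u ∈ a.2, u.card ≤ k) ∧ s = knbhd k a A} U) :
    ∀ (N : Set ℕ), N.Infinite → Init b N → ∀ (C : PolyK k), C.1 = cube F N → C ∈ U →
      ∃ t, b ⊆ t ∧ Init t N ∧ ∀ (N' : Set ℕ) (C' : PolyK k), N'.Infinite → Init t N' →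
        N' ⊆ N → C'.1 = cube F N' → C' ∈ U := by
  induction hU with
  | basic s hs =>
    obtain ⟨a', A', _, _, rfl⟩ := hs
    intro N hNinf hNb C hC hCU
    obtain ⟨hple, m, happrox⟩ := hCU
    have htinit : Init (vrestrict N (max m b.card)) N := vr_init hNinf _
    have hcard : (vrestrict N (max m b.card)).card = max m b.card := vr_card hNinf _
    refine ⟨vrestrict N (max m b.card), ?_, htinit, ?_⟩
    · have hsub := vr_mono (M := N) (le_max_right m b.card)
      rwa [vr_eq_of_init hNinf hNb] at hsub
    · intro N' C' hN'inf hN't hN'N hC'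
      rw [hC] at hple
      refine ⟨?_, m, ?_⟩
      · rw [hC']
        exact ⟨hN'N.trans hple.1,
          (Set.union_subset_union_right _ (sing_mono hN'N)).trans hple.2⟩
      · rw [hC']
        have := approx_cube_agree (F := F) (m := m) hNinf hN'inf htinit hN't
          (by rw [hcard]; exact le_max_left _ _)
        rw [this, ← show C.1 = cube F N from hC]
        exact happrox
  | univ =>
    intro N _ hNb C _ _
    exact ⟨b, subset_rfl, hNb, fun _ _ _ _ _ _ => trivial⟩
  | inter U₁ U₂ h₁ h₂ ih₁ ih₂ =>
    intro N hNinf hNb C hC hCU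
    obtain ⟨t₁, hbt₁, ht₁, H₁⟩ := ih₁ N hNinf hNb C hC hCU.1
    obtain ⟨t₂, hbt₂, ht₂, H₂⟩ := ih₂ N hNinf hNb C hC hCU.2
    rcases init_comparable ht₁ ht₂ with hc | hc
    · exact ⟨t₂, hbt₂, ht₂, fun N' C' a1 a2 a3 a4 =>
        ⟨H₁ N' C' a1 (init_of_initF (init_initF ht₁ ht₂ hc) a2) a3 a4,
         H₂ N' C' a1 a2 a3 a4⟩⟩
    · exact ⟨t₁, hbt₁, ht₁, fun N' C' a1 a2 a3 a4 =>
        ⟨H₁ N' C' a1 a2 a3 a4,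
         H₂ N' C' a1 (init_of_initF (init_initF ht₂ ht₁ hc) a2) a3 a4⟩⟩
  | sUnion S hS ih =>
    intro N hNinf hNb C hC hCU
    obtain ⟨U', hU'S, hCU'⟩ := hCU
    obtain ⟨t, h1, h2, H⟩ := ih U' hU'S N hNinf hNb C hC hCU'
    exact ⟨t, h1, h2, fun N' C' a1 a2 a3 a4 => ⟨U', hU'S, H N' C' a1 a2 a3 a4⟩⟩

lemma dense_transfer {k : ℕ} (hk : 0 < k) {F : Set (Finset ℕ)} {b : Finset ℕ}
    (hFb : ∀ u ∈ F, u ⊆ b) (hFh : Hereditary F) (hF0 : ∅ ∈ F)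
    (hFk : ∀ u ∈ F, u.card ≤ k) {U : Set (PolyK k)}
    (hU : @Dense (PolyK k) (kTop k) U) (t : Finset ℕ) (Z : Set ℕ)
    (hbt : b ⊆ t) (habtZ : above t Z) (hZinf : Z.Infinite) :
    ∃ N, N.Infinite ∧ Init t N ∧ N ⊆ ↑t ∪ Z ∧
      ∃ C : PolyK k, C.1 = cube F N ∧ C ∈ U := by
  letI : TopologicalSpace (PolyK k) := kTop k
  have hbase : (↑t ∪ Z : Set ℕ).Infinite := hZinf.mono subset_union_right
  have hbt' : (↑b : Set ℕ) ⊆ ↑t ∪ Z :=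
    fun y hy => Or.inl (Finset.coe_subset.2 hbt hy)
  have hpoly := cube_infpoly hk hFb hFh hF0 hFk hbase hbt'
  set BM : PolyK k := ⟨cube F (↑t ∪ Z), hpoly⟩ with hBM
  have hInitt : Init t (↑t ∪ Z) := init_union habtZ
  have hstem := stem_finpoly hk hFb hFh hF0 hFk hbt
  set G := knbhd k (stemPair F t) BM with hG
  have hGopen : IsOpen G :=
    TopologicalSpace.GenerateOpen.basic G ⟨stemPair F t, BM, hstem.1, hstem.2, rfl⟩
  have hGmem : BM ∈ G := by
    rw [hG, knbhd_cube hFb hF0 hbt BM rfl]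
    exact ⟨↑t ∪ Z, hbase, hInitt, subset_rfl, rfl⟩
  obtain ⟨C, hCG, hCU⟩ := hU.inter_open_nonempty G hGopen ⟨BM, hGmem⟩
  rw [hG, knbhd_cube hFb hF0 hbt BM rfl] at hCG
  obtain ⟨N, h1, h2, h3, h4⟩ := hCG
  exact ⟨N, h1, h2, h3, C, h4, hCU⟩

lemma meagre_seq {α : Type*} [TopologicalSpace α] {X : Set α} (h : IsMeagre X) :
    ∃ f : ℕ → Set α, (∀ n, IsOpen (f n)) ∧ (∀ n, Dense (f n)) ∧ (⋂ n, f n) ⊆ Xᶜ := by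
  rw [IsMeagre, mem_residual_iff] at h
  obtain ⟨S, hSo, hSd, hScnt, hSsub⟩ := h
  rcases S.eq_empty_or_nonempty with rfl | hne
  · refine ⟨fun _ => Set.univ, fun _ => isOpen_univ, fun _ => dense_univ, ?_⟩
    intro x _
    exact hSsub (by simp)
  · obtain ⟨f, rfl⟩ := hScnt.exists_eq_range hne
    refine ⟨f, fun n => hSo _ ⟨n, rfl⟩, fun n => hSd _ ⟨n, rfl⟩, ?_⟩
    rwa [Set.sInter_range] at hSsub

end PolyCore


namespace PolyCore

theorem main_kernel (k : ℕ) (hk : 0 < k) (U Mg : Set (PolyK k))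
    (hUo : @IsOpen (PolyK k) (kTop k) U) (hMgm : @IsMeagre (PolyK k) (kTop k) Mg) :
    ∀ (a : PPair) (A : PolyK k), FinPoly a → (∀ u ∈ a.2, u.card ≤ k) →
      (knbhd k a A).Nonempty →
      ∃ B ∈ knbhd k a A, (knbhd k a B ⊆ U ∧ knbhd k a B ∩ Mg = ∅) ∨
        (knbhd k a B ∩ U = ∅ ∧ knbhd k a B ∩ Mg = ∅) := by
  classical
  letI : TopologicalSpace (PolyK k) := kTop k
  intro a A ha hacard hne
  obtain ⟨C, hC⟩ := hne
  obtain ⟨hple, n, hn⟩ := hC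
  set D := C.1.1 with hD
  have hDinf : D.Infinite := C.2.1.2
  have hCpoly : IsPolyPair C.1 := C.2.1.1
  set b := vrestrict D n with hb
  have hbD : Init b D := vr_init hDinf n
  have hbDc : (↑b : Set ℕ) ⊆ D := hbD.1
  have ha1 : a.1 = ↑b := by rw [← hn]; rfl
  have ha2 : a.2 = frestrict C.1.2 b := by rw [← hn]; rfl
  set F := a.2 with hF
  have hFb : ∀ u ∈ F, u ⊆ b := by
    intro u hu
    have := ha.1.1 u hu
    rw [ha1] at this
    exact Finset.coe_subset.1 this
  have hFh : Hereditary F := ha.1.2.1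
  have hF0 : ∅ ∈ F := by
    rw [ha2]
    obtain ⟨x, hx⟩ := hDinf.nonempty
    obtain ⟨u, hu, -⟩ := hCpoly.2.2 x hx
    have h0 : (∅ : Finset ℕ) ∈ C.1.2 := hCpoly.2.1 ∅ u (Finset.empty_subset u) hu
    exact ⟨∅, h0, Finset.empty_inter b⟩
  have hFk : ∀ u ∈ F, u.card ≤ k := hacard
  have hsingD : ∀ v ∈ D, ({v} : Finset ℕ) ∈ C.1.2 := by
    intro v hv
    obtain ⟨u, hu, hvu⟩ := hCpoly.2.2 v hv
    exact hCpoly.2.1 {v} u (Finset.singleton_subset_iff.2 hvu) hu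
  have hsingb : sing ↑b ⊆ F := by
    rintro _ ⟨v, hv, rfl⟩
    have hvb : v ∈ b := Finset.mem_coe.1 hv
    rw [ha2]
    exact ⟨{v}, hsingD v (hbDc hv), Finset.singleton_inter_of_mem hvb⟩
  have hstem : stemPair F b = a := by
    have h2 : F ∪ sing ↑b = a.2 := (Set.union_eq_left.2 hsingb).trans hF
    show ((↑b : Set ℕ), F ∪ sing ↑b) = a
    rw [h2, ← ha1]
  have hDA : D ⊆ A.1.1 := hple.1
  have hCA : C.1.2 ⊆ A.1.2 := hple.2
  have hFA : F ⊆ A.1.2 := by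
    intro u hu
    rw [ha2] at hu
    obtain ⟨w, hw, rfl⟩ := hu
    exact hCA (hCpoly.2.1 _ w Finset.inter_subset_left hw)
  have hmk : ∀ (W : Set ℕ), W.Infinite → Init b W →
      (InfPoly (cube F W) ∧ ∀ u ∈ (cube F W).2, u.card ≤ k) :=
    fun W h1 h2 => cube_infpoly hk hFb hFh hF0 hFk h1 h2.1
  have hmemA : ∀ (W : Set ℕ) (h1 : W.Infinite) (h2 : Init b W), W ⊆ D →
      (⟨cube F W, hmk W h1 h2⟩ : PolyK k) ∈ knbhd k a A := by
    intro W h1 h2 h3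
    refine ⟨⟨h3.trans hDA, ?_⟩, b.card, ?_⟩
    · rintro u (hu | ⟨v, hv, rfl⟩)
      · exact hFA hu
      · exact hCA (hsingD v (h3 hv))
    · rw [← hstem]
      exact approx_cube_eq hF0 h1 h2 hFb
  -- meagre avoidance
  obtain ⟨f, hfo, hfd, hfsub⟩ := meagre_seq (α := PolyK k) (X := Mg) hMgm
  set 𝒰 : ℕ → Set (Set ℕ) :=
    fun i => {N | ∃ Cc : PolyK k, Cc.1 = cube F N ∧ Cc ∈ f i} with h𝒰
  set Zb := D \ ↑b with hZbdef
  have hZbinf : Zb.Infinite := diff_finset_infinite hDinf b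
  have hZbab : above b Zb := init_above hbD
  have hbZb : ↑b ∪ Zb = D := Set.union_diff_cancel hbDc
  have hOpenPull : ∀ (V : Set (PolyK k)), @IsOpen (PolyK k) (kTop k) V →
      ∀ M, (∃ Cc : PolyK k, Cc.1 = cube F M ∧ Cc ∈ V) → M.Infinite → Init b M →
      ∃ t, b ⊆ t ∧ Init t M ∧ ebasic t M ⊆
        {N | ∃ Cc : PolyK k, Cc.1 = cube F N ∧ Cc ∈ V} := by
    intro V hVo M hM hMinf hMb
    obtain ⟨Cc, hCc1, hCc2⟩ := hM
    obtain ⟨t, h1, h2, H⟩ := open_transfer hFb hVo M hMinf hMb Cc hCc1 hCc2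
    refine ⟨t, h1, h2, ?_⟩
    rintro N' ⟨hN'inf, hN't, hN'M⟩
    have hbN' : Init b N' := init_of_initF (init_initF hMb h2 h1) hN't
    exact ⟨⟨cube F N', hmk N' hN'inf hbN'⟩, rfl, H N' _ hN'inf hN't hN'M rfl⟩
  have hOpen𝒰 : ∀ i, ∀ M ∈ 𝒰 i, M.Infinite → Init b M → M ⊆ ↑b ∪ Zb →
      ∃ t, b ⊆ t ∧ Init t M ∧ ebasic t M ⊆ 𝒰 i :=
    fun i M hM hMinf hMb _ => hOpenPull (f i) (hfo i) M hM hMinf hMb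
  have hDense𝒰 : ∀ i (t : Finset ℕ) (Z : Set ℕ), b ⊆ t → above t Z → Z.Infinite →
      ↑t ∪ Z ⊆ ↑b ∪ Zb → ∃ M, M ∈ 𝒰 i ∧ M ∈ ebasic t (↑t ∪ Z) := by
    intro i t Z hbt habtZ hZinf _
    obtain ⟨N, h1, h2, h3, Cc, hc1, hc2⟩ :=
      dense_transfer hk hFb hFh hF0 hFk (hfd i) t Z hbt habtZ hZinf
    exact ⟨N, ⟨Cc, hc1, hc2⟩, h1, h2, h3⟩
  obtain ⟨W₁, hW₁mem, hW₁⟩ := coreMeagre 𝒰 b Zb hZbinf hZbab hOpen𝒰 hDense𝒰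
  obtain ⟨hW₁inf, hW₁init, hW₁sub'⟩ := hW₁mem
  have hW₁D : W₁ ⊆ D := by rwa [hbZb] at hW₁sub'
  have havoid : ∀ N, N ∈ ebasic b W₁ → ∀ (c : PolyK k), c.1 = cube F N → c ∉ Mg := by
    intro N hN c hc hcM
    have hall := hW₁ N hN
    have hcf : ∀ i, c ∈ f i := by
      intro i
      obtain ⟨Cc, h1, h2⟩ := hall i
      have hEq : Cc = c := Subtype.ext (h1.trans hc.symm)
      rwa [hEq] at h2
    exact (hfsub (Set.mem_iInter.2 hcf)) hcM
  -- open part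
  set 𝒪 : Set (Set ℕ) := {N | ∃ Cc : PolyK k, Cc.1 = cube F N ∧ Cc ∈ U} with h𝒪
  set Zb1 := W₁ \ ↑b with hZb1def
  have hZb1inf : Zb1.Infinite := diff_finset_infinite hW₁inf b
  have hZb1ab : above b Zb1 := init_above hW₁init
  have hbZb1 : ↑b ∪ Zb1 = W₁ := Set.union_diff_cancel hW₁init.1
  have hOpen𝒪 : ∀ M ∈ 𝒪, M.Infinite → Init b M → M ⊆ ↑b ∪ Zb1 →
      ∃ t, b ⊆ t ∧ Init t M ∧ ebasic t M ⊆ 𝒪 :=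
    fun M hM hMinf hMb _ => hOpenPull U hUo M hM hMinf hMb
  obtain ⟨W, hWmem, hWcase⟩ := coreOpen 𝒪 b Zb1 hZb1inf hZb1ab hOpen𝒪
  rw [hbZb1] at hWmem
  obtain ⟨hWinf, hWinit, hWW₁⟩ := hWmem
  have hWD : W ⊆ D := hWW₁.trans hW₁D
  set B : PolyK k := ⟨cube F W, hmk W hWinf hWinit⟩ with hB
  have hBA : B ∈ knbhd k a A := hmemA W hWinf hWinit hWD
  have hchar : knbhd k a B =
      {Cc : PolyK k | ∃ N, N.Infinite ∧ Init b N ∧ N ⊆ W ∧ Cc.1 = cube F N} := by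
    rw [← hstem]
    exact knbhd_cube hFb hF0 subset_rfl B rfl
  have hMgdisj : knbhd k a B ∩ Mg = ∅ := by
    rw [Set.eq_empty_iff_forall_notMem]
    rintro c ⟨hc, hcM⟩
    rw [hchar] at hc
    obtain ⟨N, h1, h2, h3, h4⟩ := hc
    exact havoid N ⟨h1, h2, h3.trans hWW₁⟩ c h4 hcM
  refine ⟨B, hBA, ?_⟩
  rcases hWcase with hsub | hdisj
  · left
    refine ⟨?_, hMgdisj⟩
    intro c hc
    rw [hchar] at hc
    obtain ⟨N, h1, h2, h3, h4⟩ := hc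
    obtain ⟨Cc, g1, g2⟩ := hsub ⟨h1, h2, h3⟩
    have hEq : Cc = c := Subtype.ext (g1.trans h4.symm)
    rwa [hEq] at g2
  · right
    refine ⟨?_, hMgdisj⟩
    rw [Set.eq_empty_iff_forall_notMem]
    rintro c ⟨hc, hcU⟩
    rw [hchar] at hc
    obtain ⟨N, h1, h2, h3, h4⟩ := hc
    rw [Set.eq_empty_iff_forall_notMem] at hdisj
    exact hdisj N ⟨⟨h1, h2, h3⟩, ⟨c, h4, hcU⟩⟩

end PolyCore


/-- For every `k > 0`, `𝒫_k` is a topological Ramsey space: subsets with the Baire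
property (w.r.t. the Ellentuck topology on `𝒫_k`) are Ramsey, and meager subsets are
Ramsey null. -/
theorem polyK_topological_ramsey_space (k : ℕ) (hk : 0 < k) (X : Set (PolyK k)) :
    (KHasBaireProperty k X → KIsRamsey k X) ∧
    (@IsMeagre (PolyK k) (kTop k) X → KIsRamseyNull k X) := by
  constructor
  · rintro ⟨U, Mg, hUo, hMgm, hX⟩
    intro a A ha hacard hne
    obtain ⟨B, hBA, hcase⟩ := PolyCore.main_kernel k hk U Mg hUo hMgm a A ha hacard hne
    refine ⟨B, hBA, ?_⟩
    rcases hcase with ⟨h1, h2⟩ | ⟨h1, h2⟩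
    · left
      intro c hc
      rw [hX, Set.mem_symmDiff]
      exact Or.inl ⟨h1 hc, fun hm => (Set.eq_empty_iff_forall_notMem.1 h2) c ⟨hc, hm⟩⟩
    · right
      rw [Set.eq_empty_iff_forall_notMem]
      rintro c ⟨hc, hcX⟩
      rw [hX, Set.mem_symmDiff] at hcX
      rcases hcX with ⟨hcU, -⟩ | ⟨hcM, -⟩
      · exact (Set.eq_empty_iff_forall_notMem.1 h1) c ⟨hc, hcU⟩
      · exact (Set.eq_empty_iff_forall_notMem.1 h2) c ⟨hc, hcM⟩
  · intro hXm a A ha hacard hne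
    obtain ⟨B, hBA, hcase⟩ := PolyCore.main_kernel k hk ∅ X
      (@isOpen_empty (PolyK k) (kTop k)) hXm a A ha hacard hne
    exact ⟨B, hBA, by rcases hcase with ⟨-, h2⟩ | ⟨-, h2⟩ <;> exact h2⟩
end

section
/- (Ramsey property for the class of finite ordered k-polyhedra.) Fix an integer k > 0. For every pair of finite ordered k-polyhedra (a,S_a), (b,S_b) ∈ 𝒜𝒫_k such that (a,S_a) admits a copy inside (b,S_b), and for every integer r ≥ 1, there exists (c,S_c) ∈ 𝒜𝒫_k such that for every r-coloring of the set of copies of (a,S_a) inside (c,S_c) there exists a copy f of (b,S_b) inside (c,S_c) such that all copies of (a,S_a) whose image is contained in the image of f receive the same color. -/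
open Set

/-- `(a,S_a)` is a finite ordered `k`-polyhedron: `a` is a finite nonempty subset of `ℕ`,
`S_a` is a hereditary collection of subsets of `a` with `⋃ S_a = a` and `|u| ≤ k` for
every `u ∈ S_a`. -/
def FinOrdPolyK (k : ℕ) (a : Finset ℕ) (Sa : Set (Finset ℕ)) : Prop :=
  a.Nonempty ∧ (∀ u ∈ Sa, u ⊆ a) ∧
    (∀ u v : Finset ℕ, u ⊆ v → v ∈ Sa → u ∈ Sa) ∧
    (∀ i ∈ a, ∃ u ∈ Sa, i ∈ u) ∧
    (∀ u ∈ Sa, u.card ≤ k)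

/-- `f` is a copy of `(a,S_a)` inside `(c,S_c)`: a strictly increasing injection of `a`
into `c` such that for every `u ⊆ a`, `u ∈ S_a` iff `f(u) ∈ S_c`. -/
def IsCopyFun (f : ℕ → ℕ) (a : Finset ℕ) (Sa : Set (Finset ℕ)) (c : Finset ℕ)
    (Sc : Set (Finset ℕ)) : Prop :=
  StrictMonoOn f ↑a ∧ Set.MapsTo f ↑a ↑c ∧ ∀ u ⊆ a, (u ∈ Sa ↔ u.image f ∈ Sc)

/-- `d` is (the image of) a copy of `(a,S_a)` inside `(c,S_c)`. -/
def IsCopy (d : Finset ℕ) (a : Finset ℕ) (Sa : Set (Finset ℕ)) (c : Finset ℕ)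
    (Sc : Set (Finset ℕ)) : Prop :=
  ∃ f : ℕ → ℕ, IsCopyFun f a Sa c Sc ∧ a.image f = d

/-! ### Auxiliary general lemmas -/

lemma image_eq_image_of_injOn {f : ℕ → ℕ} {s u v : Finset ℕ} (hf : Set.InjOn f ↑s)
    (hu : u ⊆ s) (hv : v ⊆ s) (h : u.image f = v.image f) : u = v := by
  apply Finset.Subset.antisymm <;> intro x hx
  · have : f x ∈ v.image f := h ▸ Finset.mem_image_of_mem f hx
    obtain ⟨y, hy, hxy⟩ := Finset.mem_image.1 this
    rwa [hf (hv hy) (hu hx) hxy] at hy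
  · have : f x ∈ u.image f := h.symm ▸ Finset.mem_image_of_mem f hx
    obtain ⟨y, hy, hxy⟩ := Finset.mem_image.1 this
    rwa [hf (hu hy) (hv hx) hxy] at hy

lemma subset_image' {f : ℕ → ℕ} {s t : Finset ℕ} (h : t ⊆ s.image f) :
    ∃ u ⊆ s, t = u.image f := by
  obtain ⟨u, hu, hut⟩ := Finset.subset_image_iff.1 h
  exact ⟨u, hu, hut.symm⟩

/-- Two strictly monotone maps on a finset with the same image agree. -/
lemma strictMonoOn_unique {f g : ℕ → ℕ} {s : Finset ℕ} (hf : StrictMonoOn f ↑s)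
    (hg : StrictMonoOn g ↑s) (h : s.image f = s.image g) : ∀ x ∈ s, f x = g x := by
  classical
  set e := s.orderEmbOfFin rfl with he
  have hcf : (s.image f).card = s.card := Finset.card_image_of_injOn hf.injOn
  have hcg : (s.image g).card = s.card := by rw [← h, hcf]
  have hFmem : ∀ i : Fin s.card, f (e i) ∈ s.image f :=
    fun i => Finset.mem_image_of_mem f (s.orderEmbOfFin_mem rfl i)
  have hGmem : ∀ i : Fin s.card, g (e i) ∈ s.image g :=
    fun i => Finset.mem_image_of_mem g (s.orderEmbOfFin_mem rfl i)
  have hFs : StrictMono (fun i => f (e i)) := fun i j hij =>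
    hf (s.orderEmbOfFin_mem rfl i) (s.orderEmbOfFin_mem rfl j) (e.strictMono hij)
  have hGs : StrictMono (fun i => g (e i)) := fun i j hij =>
    hg (s.orderEmbOfFin_mem rfl i) (s.orderEmbOfFin_mem rfl j) (e.strictMono hij)
  have hF := Finset.orderEmbOfFin_unique hcf hFmem hFs
  have hGmem' : ∀ i : Fin s.card, g (e i) ∈ s.image f := fun i => h ▸ hGmem i
  have hG := Finset.orderEmbOfFin_unique hcf hGmem' hGs
  have himg : ∀ i : Fin s.card, f (e i) = g (e i) := by
    intro i
    rw [congrFun hF i, congrFun hG i]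
  intro x hx
  have : x ∈ Set.range e := by rw [he, Finset.range_orderEmbOfFin]; exact hx
  obtain ⟨i, rfl⟩ := this
  exact himg i

/-! ### Pictures -/

structure Pic where
  n : ℕ
  V : Finset ℕ
  S : Set (Finset ℕ)
  pt : ℕ → ℕ

structure Pic.Valid (k : ℕ) (P : Pic) : Prop where
  ne : P.V.Nonempty
  pt_lt : ∀ v ∈ P.V, P.pt v < P.n
  mono : ∀ v ∈ P.V, ∀ w ∈ P.V, P.pt v < P.pt w → v < w
  sub : ∀ u ∈ P.S, u ⊆ P.V
  her : ∀ ⦃u v : Finset ℕ⦄, u ⊆ v → v ∈ P.S → u ∈ P.S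
  cov : ∀ v ∈ P.V, ({v} : Finset ℕ) ∈ P.S
  dim : ∀ u ∈ P.S, u.card ≤ k
  inj : ∀ u ∈ P.S, Set.InjOn P.pt ↑u

/-- part-preserving embedding of pictures -/
def PEmb (g : ℕ → ℕ) (P Q : Pic) : Prop :=
  IsCopyFun g P.V P.S Q.V Q.S ∧ ∀ v ∈ P.V, Q.pt (g v) = P.pt v

/-- `d` is a transversal copy of `(aa,SA)` in picture `P` with part pattern `I`. -/
def ACopyOver (aa : Finset ℕ) (SA : Set (Finset ℕ)) (d I : Finset ℕ) (P : Pic) : Prop :=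
  IsCopy d aa SA P.V P.S ∧ Set.InjOn P.pt ↑d ∧ d.image P.pt = I

lemma IsCopyFun.trans {f g : ℕ → ℕ} {A B C : Finset ℕ} {SA SB SC : Set (Finset ℕ)}
    (hf : IsCopyFun f A SA B SB) (hg : IsCopyFun g B SB C SC) :
    IsCopyFun (g ∘ f) A SA C SC := by
  obtain ⟨hf1, hf2, hf3⟩ := hf
  obtain ⟨hg1, hg2, hg3⟩ := hg
  refine ⟨hg1.comp hf1 hf2, hg2.comp hf2, fun u hu => ?_⟩
  have h1 : u.image f ⊆ B := by
    intro y hy; obtain ⟨x, hx, rfl⟩ := Finset.mem_image.1 hy; exact hf2 (hu hx)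
  rw [hf3 u hu, hg3 _ h1, Finset.image_image]

lemma PEmb.comp {g₁ g₂ : ℕ → ℕ} {P Q R : Pic} (h₁ : PEmb g₁ P Q) (h₂ : PEmb g₂ Q R) :
    PEmb (g₂ ∘ g₁) P R := by
  refine ⟨h₁.1.trans h₂.1, fun v hv => ?_⟩
  rw [Function.comp_apply, h₂.2 _ (h₁.1.2.1 hv), h₁.2 v hv]

lemma ACopyOver.copy_sub {aa d I : Finset ℕ} {SA : Set (Finset ℕ)} {P : Pic}
    (h : ACopyOver aa SA d I P) : d ⊆ P.V := by
  obtain ⟨⟨f, hf, rfl⟩, _, _⟩ := h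
  intro y hy; obtain ⟨x, hx, rfl⟩ := Finset.mem_image.1 hy; exact hf.2.1 hx

/-- the part function composed with a copy function of a transversal copy is strictly
monotone on the domain -/
lemma acopy_pt_strictMonoOn {aa d : Finset ℕ} {SA : Set (Finset ℕ)} {P : Pic}
    (hP : ∀ v ∈ P.V, ∀ w ∈ P.V, P.pt v < P.pt w → v < w)
    {f : ℕ → ℕ} (hf : IsCopyFun f aa SA P.V P.S) (him : aa.image f = d)
    (hinj : Set.InjOn P.pt ↑d) : StrictMonoOn (P.pt ∘ f) ↑aa := by
  intro x hx y hy hxy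
  have hfx : f x ∈ d := him ▸ Finset.mem_image_of_mem f hx
  have hfy : f y ∈ d := him ▸ Finset.mem_image_of_mem f hy
  have hlt : f x < f y := hf.1 hx hy hxy
  have hVx : f x ∈ P.V := hf.2.1 hx
  have hVy : f y ∈ P.V := hf.2.1 hy
  have hle : P.pt (f x) ≤ P.pt (f y) := by
    by_contra hcon
    exact absurd (hP _ hVy _ hVx (lt_of_not_ge hcon)) (not_lt.2 hlt.le)
  rcases hle.lt_or_eq with h | h
  · exact h
  · exact absurd (hinj hfx hfy h) hlt.ne

/-- selector: the element of `d` in part `i` (when unique). -/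
noncomputable def selp (pt : ℕ → ℕ) (d : Finset ℕ) (i : ℕ) : ℕ :=
  ∑ x ∈ d.filter (fun x => pt x = i), x

lemma selp_eq {pt : ℕ → ℕ} {d : Finset ℕ} (hinj : Set.InjOn pt ↑d) {x : ℕ} (hx : x ∈ d) :
    selp pt d (pt x) = x := by
  classical
  have : d.filter (fun y => pt y = pt x) = {x} := by
    apply Finset.Subset.antisymm
    · intro y hy
      rw [Finset.mem_filter] at hy
      exact Finset.mem_singleton.2 (hinj hy.1 hx hy.2)
    · intro y hy
      rw [Finset.mem_singleton] at hy
      subst hy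
      exact Finset.mem_filter.2 ⟨hx, rfl⟩
  rw [selp, this, Finset.sum_singleton]

lemma selp_mem {pt : ℕ → ℕ} {d : Finset ℕ} (hinj : Set.InjOn pt ↑d) {i : ℕ}
    (hi : i ∈ d.image pt) : selp pt d i ∈ d ∧ pt (selp pt d i) = i := by
  obtain ⟨x, hx, rfl⟩ := Finset.mem_image.1 hi
  rw [selp_eq hinj hx]
  exact ⟨hx, rfl⟩

/-! ### Pullback of transversal copies along picture embeddings -/

lemma pemb_pullback {g : ℕ → ℕ} {P Q : Pic} (hg : PEmb g P Q)
    (hPm : ∀ v ∈ P.V, ∀ w ∈ P.V, P.pt v < P.pt w → v < w)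
    {aa d' I : Finset ℕ} {SA : Set (Finset ℕ)}
    (hd' : ACopyOver aa SA d' I Q) (hsub : d' ⊆ P.V.image g) :
    ∃ d : Finset ℕ, ACopyOver aa SA d I P ∧ d.image g = d' := by
  classical
  obtain ⟨⟨f', hf', hf'im⟩, hinj', him'⟩ := hd'
  obtain ⟨hg1, hgpt⟩ := hg
  set gi := Function.invFunOn g ↑P.V with hgi
  have hex : ∀ y ∈ d', ∃ v ∈ (↑P.V : Set ℕ), g v = y := by
    intro y hy
    obtain ⟨v, hv, rfl⟩ := Finset.mem_image.1 (hsub hy)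
    exact ⟨v, hv, rfl⟩
  have hgiV : ∀ y ∈ d', gi y ∈ P.V := fun y hy => Function.invFunOn_mem (hex y hy)
  have hggi : ∀ y ∈ d', g (gi y) = y := fun y hy => Function.invFunOn_eq (hex y hy)
  set f := fun x => gi (f' x) with hf
  have hfd' : ∀ x ∈ aa, f' x ∈ d' := fun x hx => hf'im ▸ Finset.mem_image_of_mem f' hx
  have hfV : ∀ x ∈ aa, f x ∈ P.V := fun x hx => hgiV _ (hfd' x hx)
  have hgf : ∀ x ∈ aa, g (f x) = f' x := fun x hx => hggi _ (hfd' x hx)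
  have hmono : StrictMonoOn f ↑aa := by
    intro x hx y hy hxy
    have h1 : f' x < f' y := hf'.1 hx hy hxy
    by_contra hcon
    rcases (not_lt.1 hcon).lt_or_eq with h | h
    · have := hg1.1 (hfV y hy) (hfV x hx) h
      rw [hgf x hx, hgf y hy] at this
      exact absurd h1 (not_lt.2 this.le)
    · have h2 : f' y = f' x := by rw [← hgf x hx, ← hgf y hy, h]
      exact absurd h2 h1.ne'
  have himg_comm : ∀ u ⊆ aa, (u.image f).image g = u.image f' := by
    intro u hu
    rw [Finset.image_image]
    exact Finset.image_congr (fun x hx => hgf x (hu hx))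
  have hcopy : IsCopyFun f aa SA P.V P.S := by
    refine ⟨hmono, fun x hx => hfV x hx, fun u hu => ?_⟩
    have h1 : u.image f ⊆ P.V := by
      intro y hy; obtain ⟨x, hx, rfl⟩ := Finset.mem_image.1 hy; exact hfV x (hu hx)
    rw [hf'.2.2 u hu, ← himg_comm u hu, ← hg1.2.2 _ h1]
  have him : aa.image f = aa.image f := rfl
  refine ⟨aa.image f, ⟨⟨f, hcopy, rfl⟩, ?_, ?_⟩,
    (himg_comm aa (Finset.Subset.refl _)).trans hf'im⟩
  · intro y hy z hz hyz
    simp only [Finset.coe_image, Set.mem_image] at hy hz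
    obtain ⟨x, hx, rfl⟩ := hy
    obtain ⟨x', hx', rfl⟩ := hz
    have hx'' := Finset.mem_coe.1 hx
    have hx''' := Finset.mem_coe.1 hx'
    have h1 : Q.pt (g (f x)) = Q.pt (g (f x')) := by
      rw [hgpt _ (hfV x hx''), hgpt _ (hfV x' hx''')]; exact hyz
    rw [hgf x hx'', hgf x' hx'''] at h1
    have h2 : f' x = f' x' := hinj' (Finset.mem_coe.2 (hfd' x hx''))
      (Finset.mem_coe.2 (hfd' x' hx''')) h1
    have h3 : x = x' := hf'.1.injOn hx hx' h2
    rw [h3]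
  · have : ∀ x ∈ aa, P.pt (f x) = Q.pt (f' x) := by
      intro x hx
      rw [← hgf x hx, hgpt _ (hfV x hx)]
    calc (aa.image f).image P.pt = aa.image (P.pt ∘ f) := Finset.image_image
      _ = aa.image (Q.pt ∘ f') := Finset.image_congr (fun x hx => this x hx)
      _ = (aa.image f').image Q.pt := Finset.image_image.symm
      _ = I := by rw [hf'im, him']

/-- Key transfer: two transversal copies over the same pattern; subsets picking out the
same set of parts are simultaneously edges. -/
lemma key_transfer {aa d d' I : Finset ℕ} {SA : Set (Finset ℕ)} {P : Pic}
    (hPm : ∀ v ∈ P.V, ∀ w ∈ P.V, P.pt v < P.pt w → v < w)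
    (hd : ACopyOver aa SA d I P) (hd' : ACopyOver aa SA d' I P)
    {u u' : Finset ℕ} (hu : u ⊆ d) (hu' : u' ⊆ d')
    (him : u.image P.pt = u'.image P.pt) : (u ∈ P.S ↔ u' ∈ P.S) := by
  classical
  obtain ⟨⟨f, hf, hfim⟩, hinj, hIim⟩ := hd
  obtain ⟨⟨f', hf', hfim'⟩, hinj', hIim'⟩ := hd'
  have hsm : StrictMonoOn (P.pt ∘ f) ↑aa := acopy_pt_strictMonoOn hPm hf hfim hinj
  have hsm' : StrictMonoOn (P.pt ∘ f') ↑aa := acopy_pt_strictMonoOn hPm hf' hfim' hinj'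
  have hagree : ∀ x ∈ aa, P.pt (f x) = P.pt (f' x) := by
    have h1 : aa.image (P.pt ∘ f) = aa.image (P.pt ∘ f') := by
      rw [← Finset.image_image, ← Finset.image_image, hfim, hfim', hIim, hIim']
    exact strictMonoOn_unique hsm hsm' h1
  set Pb := u.image P.pt with hPb
  set w := aa.filter (fun x => P.pt (f x) ∈ Pb) with hw
  -- u = w.image f
  have claim : ∀ (ff : ℕ → ℕ) (dd uu : Finset ℕ), IsCopyFun ff aa SA P.V P.S →
      aa.image ff = dd → Set.InjOn P.pt ↑dd → uu ⊆ dd → uu.image P.pt = Pb →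
      uu = (aa.filter (fun x => P.pt (ff x) ∈ Pb)).image ff := by
    intro ff dd uu hff hffim hinjdd huu hPbuu
    apply Finset.Subset.antisymm
    · intro y hy
      have hyd : y ∈ dd := huu hy
      obtain ⟨x, hx, rfl⟩ := Finset.mem_image.1 (hffim ▸ hyd)
      refine Finset.mem_image_of_mem ff (Finset.mem_filter.2 ⟨hx, ?_⟩)
      rw [← hPbuu]
      exact Finset.mem_image_of_mem _ hy
    · intro y hy
      obtain ⟨x, hx, rfl⟩ := Finset.mem_image.1 hy
      rw [Finset.mem_filter] at hx
      have h1 : P.pt (ff x) ∈ uu.image P.pt := hPbuu ▸ hx.2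
      obtain ⟨z, hz, hz2⟩ := Finset.mem_image.1 h1
      have hfd : ff x ∈ dd := hffim ▸ Finset.mem_image_of_mem ff hx.1
      have : z = ff x := hinjdd (Finset.mem_coe.2 (huu hz)) (Finset.mem_coe.2 hfd) hz2
      rwa [← this]
  have hu1 : u = w.image f := claim f d u ⟨hf.1, hf.2.1, hf.2.2⟩ hfim hinj hu rfl
  have hw' : w = aa.filter (fun x => P.pt (f' x) ∈ Pb) := by
    apply Finset.filter_congr
    intro x hx
    rw [hagree x hx]
  have hu2 : u' = w.image f' := by
    rw [hw']
    exact claim f' d' u' ⟨hf'.1, hf'.2.1, hf'.2.2⟩ hfim' hinj' hu' him.symm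
  have hwa : w ⊆ aa := Finset.filter_subset _ _
  rw [hu1, hu2, ← hf.2.2 w hwa, ← hf'.2.2 w hwa]

/-! ### digit encoding -/

def encR (M : ℕ) (x : ℕ → ℕ) (N : ℕ) : ℕ := ∑ i ∈ Finset.range N, x i * M ^ i

lemma encR_lt {M : ℕ} (hM : 0 < M) {x : ℕ → ℕ} {N : ℕ} (hx : ∀ i < N, x i < M) :
    encR M x N < M ^ N := by
  induction N with
  | zero => simpa [encR] using hM
  | succ N ih =>
    have h1 : encR M x N < M ^ N := ih (fun i hi => hx i (hi.trans (Nat.lt_succ_self N)))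
    have h2 : x N ≤ M - 1 := Nat.le_sub_one_of_lt (hx N (Nat.lt_succ_self N))
    calc encR M x (N + 1) = encR M x N + x N * M ^ N := by
          simp only [encR, Finset.sum_range_succ]
      _ < M ^ N + x N * M ^ N := by omega
      _ ≤ M ^ N + (M - 1) * M ^ N := by
          have := Nat.mul_le_mul_right (M ^ N) h2; omega
      _ = M ^ (N + 1) := by
          have h3 : M ^ N + (M - 1) * M ^ N = (1 + (M - 1)) * M ^ N := by ring
          rw [h3, pow_succ]
          have : 1 + (M - 1) = M := by omega
          rw [this, Nat.mul_comm]

lemma encR_inj {M : ℕ} (hM : 0 < M) {x y : ℕ → ℕ} {N : ℕ} (hx : ∀ i < N, x i < M)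
    (hy : ∀ i < N, y i < M) (h : encR M x N = encR M y N) : ∀ i < N, x i = y i := by
  induction N with
  | zero => intro i hi; omega
  | succ N ih =>
    have hx' : ∀ i < N, x i < M := fun i hi => hx i (hi.trans (Nat.lt_succ_self N))
    have hy' : ∀ i < N, y i < M := fun i hi => hy i (hi.trans (Nat.lt_succ_self N))
    have hxl : encR M x N < M ^ N := encR_lt hM hx'
    have hyl : encR M y N < M ^ N := encR_lt hM hy'
    have hsp : encR M x (N+1) = encR M x N + x N * M ^ N := by
      simp only [encR, Finset.sum_range_succ]
    have hsp' : encR M y (N+1) = encR M y N + y N * M ^ N := by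
      simp only [encR, Finset.sum_range_succ]
    rw [hsp, hsp'] at h
    have htop : x N = y N := by
      rcases Nat.lt_trichotomy (x N) (y N) with hl | he | hg
      · exfalso
        have : encR M x N + x N * M ^ N < encR M y N + y N * M ^ N := by
          have h1 : x N * M ^ N + M ^ N ≤ y N * M ^ N := by
            have : (x N + 1) * M ^ N ≤ y N * M ^ N :=
              Nat.mul_le_mul_right _ (by omega)
            calc x N * M ^ N + M ^ N = (x N + 1) * M ^ N := by ring
              _ ≤ y N * M ^ N := this
          omega
        omega
      · exact he
      · exfalso
        have : encR M y N + y N * M ^ N < encR M x N + x N * M ^ N := by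
          have h1 : y N * M ^ N + M ^ N ≤ x N * M ^ N := by
            have : (y N + 1) * M ^ N ≤ x N * M ^ N :=
              Nat.mul_le_mul_right _ (by omega)
            calc y N * M ^ N + M ^ N = (y N + 1) * M ^ N := by ring
              _ ≤ x N * M ^ N := this
          omega
        omega
    have hrest : encR M x N = encR M y N := by
      rw [htop] at h; omega
    intro i hi
    rcases Nat.lt_or_ge i N with h' | h'
    · exact ih hx' hy' hrest i h'
    · have : i = N := by omega
      rw [this]; exact htop

/-! ### Finite Ramsey theorem for `p`-subsets -/

lemma ramsey_aux (p r : ℕ) (hr : 0 < r)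
    (IH : ∀ m' : ℕ, ∃ N : ℕ, ∀ T : Finset ℕ, N ≤ T.card → ∀ χ : Finset ℕ → Fin r,
      ∃ J, J ⊆ T ∧ J.card = m' ∧ ∃ γ, ∀ u ⊆ J, u.card = p → χ u = γ) :
    ∀ s : ℕ, ∃ N : ℕ, ∀ T : Finset ℕ, N ≤ T.card → ∀ χ : Finset ℕ → Fin r,
      ∃ A, A ⊆ T ∧ A.card = s ∧ ∃ c : ℕ → Fin r,
        ∀ u ⊆ A, u.card = p + 1 → ∀ hu : u.Nonempty, χ u = c (u.min' hu) := by
  intro s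
  induction s with
  | zero =>
    exact ⟨0, fun T _ χ => ⟨∅, Finset.empty_subset T, Finset.card_empty,
      fun _ => ⟨0, hr⟩, fun u hu hcard hne => absurd (Finset.subset_empty.1 hu)
        (Finset.nonempty_iff_ne_empty.1 hne)⟩⟩
  | succ s ihs =>
    obtain ⟨Ns, hNs⟩ := ihs
    obtain ⟨Np, hNp⟩ := IH Ns
    refine ⟨Np + 1, fun T hT χ => ?_⟩
    have hTne : T.Nonempty := Finset.card_pos.1 (by omega)
    set x := T.min' hTne with hx
    set T' := T.erase x with hT'
    have hT'card : Np ≤ T'.card := by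
      rw [hT', Finset.card_erase_of_mem (T.min'_mem hTne)]; omega
    set χ' : Finset ℕ → Fin r := fun u => χ (insert x u) with hχ'
    obtain ⟨J, hJT', hJcard, γ, hγ⟩ := hNp T' hT'card χ'
    obtain ⟨A', hA'J, hA'card, c', hc'⟩ := hNs J (le_of_eq hJcard.symm) χ
    have hxlt : ∀ y ∈ A', x < y := by
      intro y hy
      have hyT' : y ∈ T' := hJT' (hA'J hy)
      have hyT : y ∈ T := Finset.mem_of_mem_erase hyT'
      have hne : y ≠ x := Finset.ne_of_mem_erase hyT'
      exact lt_of_le_of_ne (T.min'_le y hyT) (Ne.symm hne)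
    have hxA' : x ∉ A' := fun h => lt_irrefl x (hxlt x h)
    refine ⟨insert x A', ?_, ?_, fun y => if y = x then γ else c' y, ?_⟩
    · intro y hy
      rcases Finset.mem_insert.1 hy with rfl | hy'
      · exact T.min'_mem hTne
      · exact Finset.mem_of_mem_erase (hJT' (hA'J hy'))
    · rw [Finset.card_insert_of_notMem hxA', hA'card]
    · intro u hu hucard hune
      by_cases hxu : x ∈ u
      · have hmin : u.min' hune = x := by
          apply le_antisymm
          · exact Finset.min'_le u x hxu
          · apply Finset.le_min'
            intro y hy
            rcases Finset.mem_insert.1 (hu hy) with rfl | hy'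
            · exact le_refl _
            · exact (hxlt y hy').le
        rw [hmin]
        simp only [if_pos rfl]
        have herase : u.erase x ⊆ J := by
          intro y hy
          have : y ∈ A' := by
            rcases Finset.mem_insert.1 (hu (Finset.mem_of_mem_erase hy)) with rfl | h'
            · exact absurd rfl (Finset.ne_of_mem_erase hy)
            · exact h'
          exact hA'J this
        have hec : (u.erase x).card = p := by
          rw [Finset.card_erase_of_mem hxu, hucard]; rfl
        have := hγ (u.erase x) herase hec
        rw [hχ'] at this
        simp only at this
        rwa [Finset.insert_erase hxu] at this
      · have huA' : u ⊆ A' := by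
          intro y hy
          rcases Finset.mem_insert.1 (hu hy) with rfl | h'
          · exact absurd hy hxu
          · exact h'
        have hminA : u.min' hune ∈ A' := huA' (u.min'_mem hune)
        have hminx : u.min' hune ≠ x := fun h => hxA' (h ▸ hminA)
        show χ u = if u.min' hune = x then γ else c' (u.min' hune)
        rw [if_neg hminx]
        exact hc' u huA' hucard hune

theorem setRamsey (p : ℕ) : ∀ r m : ℕ, 0 < r → ∃ N : ℕ, ∀ T : Finset ℕ, N ≤ T.card →
    ∀ χ : Finset ℕ → Fin r, ∃ J, J ⊆ T ∧ J.card = m ∧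
      ∃ γ, ∀ u ⊆ J, u.card = p → χ u = γ := by
  induction p with
  | zero =>
    intro r m hr
    refine ⟨m, fun T hT χ => ?_⟩
    obtain ⟨J, hJ, hJcard⟩ := Finset.exists_subset_card_eq hT
    refine ⟨J, hJ, hJcard, χ ∅, fun u hu hcard => ?_⟩
    rw [Finset.card_eq_zero.1 hcard]
  | succ p ih =>
    intro r m hr
    obtain ⟨N, hN⟩ := ramsey_aux p r hr (fun m' => ih r m' hr) (r * m + 1)
    refine ⟨N, fun T hT χ => ?_⟩
    obtain ⟨A, hAT, hAcard, c, hc⟩ := hN T hT χ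
    classical
    have hpig : ∃ γ ∈ (Finset.univ : Finset (Fin r)), m < (A.filter (fun y => c y = γ)).card := by
      apply Finset.exists_lt_card_fiber_of_mul_lt_card_of_maps_to
      · intro y _; exact Finset.mem_univ _
      · rw [hAcard, Finset.card_univ, Fintype.card_fin]; omega
    obtain ⟨γ, _, hγcard⟩ := hpig
    obtain ⟨J, hJfib, hJcard⟩ := Finset.exists_subset_card_eq (le_of_lt hγcard)
    refine ⟨J, fun y hy => hAT (Finset.mem_of_mem_filter y (hJfib hy)), hJcard, γ, ?_⟩
    intro u hu hucard
    have hune : u.Nonempty := Finset.card_pos.1 (by omega)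
    have huA : u ⊆ A := fun y hy => Finset.mem_of_mem_filter y (hJfib (hu hy))
    have hmem : u.min' hune ∈ A.filter (fun y => c y = γ) := hJfib (hu (u.min'_mem hune))
    rw [hc u huA hucard hune, (Finset.mem_filter.1 hmem).2]

/-! ### The base picture -/

lemma base_lemma (k q n : ℕ) (b : Finset ℕ) (Sb : Set (Finset ℕ)) (hb : FinOrdPolyK k b Sb)
    (hq : b.card = q) (hn : q ≤ n) :
    ∃ P : Pic, P.Valid k ∧ P.n = n ∧ ∀ J, J ⊆ Finset.range n → J.card = q →
      ∃ f : ℕ → ℕ, IsCopyFun f b Sb P.V P.S ∧ Set.InjOn P.pt ↑(b.image f) ∧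
        (b.image f).image P.pt = J := by
  classical
  obtain ⟨hbne, hbsub, hbher, hbcov, hbdim⟩ := hb
  have hq1 : 0 < q := hq ▸ Finset.card_pos.2 hbne
  set Qs : Finset (Finset ℕ) := (Finset.range n).powersetCard q with hQs
  set Ql : List (Finset ℕ) := Qs.toList with hQl
  set KB : ℕ := Ql.length with hKB
  have hmemQs : ∀ J, J ∈ Qs ↔ (J ⊆ Finset.range n ∧ J.card = q) := by
    intro J; rw [hQs, Finset.mem_powersetCard]
  have hmemQl : ∀ J, J ∈ Ql ↔ J ∈ Qs := fun J => Finset.mem_toList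
  set idx : Finset ℕ → ℕ := fun J => Ql.idxOf J with hidxd
  have hidxlt : ∀ J ∈ Qs, idx J < KB := by
    intro J hJ
    exact List.idxOf_lt_length_iff.2 ((hmemQl J).2 hJ)
  have hidxinj : ∀ J ∈ Qs, ∀ J' ∈ Qs, idx J = idx J' → J = J' := by
    intro J hJ J' hJ' h
    exact (List.idxOf_inj (y := J') ((hmemQl J).2 hJ)).1 h
  have hKB0 : 0 < KB := by
    have : (Finset.range q) ∈ Qs := (hmemQs _).2
      ⟨Finset.range_subset_range.2 hn, Finset.card_range q⟩
    have := hidxlt _ this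
    omega
  set rk : ℕ → ℕ := fun x => (b.filter (· < x)).card with hrk
  have hrkmono : StrictMonoOn rk ↑b := by
    intro x hx y hy hxy
    apply Finset.card_lt_card
    constructor
    · intro z hz
      rw [Finset.mem_filter] at hz ⊢
      exact ⟨hz.1, hz.2.trans hxy⟩
    · intro hcon
      have : x ∈ b.filter (· < y) := Finset.mem_filter.2 ⟨hx, hxy⟩
      have := Finset.mem_filter.1 (hcon this)
      omega
  have hrklt : ∀ x ∈ b, rk x < q := by
    intro x hx
    have h1 : b.filter (· < x) ⊆ b.erase x := by
      intro z hz
      rw [Finset.mem_filter] at hz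
      exact Finset.mem_erase.2 ⟨by omega, hz.1⟩
    calc rk x ≤ (b.erase x).card := Finset.card_le_card h1
      _ < q := by rw [Finset.card_erase_of_mem hx]; omega
  have hrkim : b.image rk = Finset.range q := by
    apply Finset.eq_of_subset_of_card_le
    · intro y hy
      obtain ⟨x, hx, rfl⟩ := Finset.mem_image.1 hy
      exact Finset.mem_range.2 (hrklt x hx)
    · rw [Finset.card_range, Finset.card_image_of_injOn hrkmono.injOn, hq]
  set nth : Finset ℕ → ℕ → ℕ :=
    fun J i => if h : i < J.card then J.orderEmbOfFin rfl ⟨i, h⟩ else 0 with hnth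
  have hnthmem : ∀ (J : Finset ℕ), ∀ i < J.card, nth J i ∈ J := by
    intro J i hi
    rw [hnth]
    simp only [dif_pos hi]
    exact J.orderEmbOfFin_mem rfl _
  have hnthmono : ∀ (J : Finset ℕ), ∀ i < J.card, ∀ j < J.card, i < j →
      nth J i < nth J j := by
    intro J i hi j hj hij
    rw [hnth]
    simp only [dif_pos hi, dif_pos hj]
    exact (J.orderEmbOfFin rfl).strictMono (by exact hij)
  set fB : Finset ℕ → ℕ → ℕ := fun J x => KB * nth J (rk x) + idx J with hfB
  set PV : Finset ℕ := Qs.biUnion (fun J => b.image (fB J)) with hPV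
  set PS : Set (Finset ℕ) := {w | ∃ J ∈ Qs, ∃ u ∈ Sb, w = u.image (fB J)} with hPS
  set P : Pic := ⟨n, PV, PS, fun v => v / KB⟩ with hP
  have hptv : ∀ J ∈ Qs, ∀ x ∈ b, P.pt (fB J x) = nth J (rk x) := by
    intro J hJ x hx
    show (KB * nth J (rk x) + idx J) / KB = nth J (rk x)
    rw [Nat.mul_add_div hKB0, Nat.div_eq_of_lt (hidxlt J hJ)]
    omega
  have hfmono : ∀ J ∈ Qs, StrictMonoOn (fB J) ↑b := by
    intro J hJ x hx y hy hxy
    have hcard : J.card = q := ((hmemQs J).1 hJ).2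
    have h1 : nth J (rk x) < nth J (rk y) := hnthmono J _ (by rw [hcard]; exact hrklt x hx)
      _ (by rw [hcard]; exact hrklt y hy) (hrkmono hx hy hxy)
    show KB * nth J (rk x) + idx J < KB * nth J (rk y) + idx J
    have h2 : KB * (nth J (rk x) + 1) ≤ KB * nth J (rk y) :=
      Nat.mul_le_mul_left KB (Nat.succ_le_of_lt h1)
    have h3 := hidxlt J hJ
    have h4 : KB * (nth J (rk x) + 1) = KB * nth J (rk x) + KB := by ring
    omega
  have hedge_fwd : ∀ J ∈ Qs, ∀ u ∈ Sb, u.image (fB J) ∈ PS := by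
    intro J hJ u hu
    exact ⟨J, hJ, u, hu, rfl⟩
  have hedge_back : ∀ J ∈ Qs, ∀ u ⊆ b, u.image (fB J) ∈ PS → u ∈ Sb := by
    intro J hJ u hub hmem
    obtain ⟨J', hJ', u', hu', heq⟩ := hmem
    have hu'b : u' ⊆ b := hbsub u' hu'
    rcases u.eq_empty_or_nonempty with rfl | ⟨x, hx⟩
    · have : u'.image (fB J') = ∅ := by rw [← heq, Finset.image_empty]
      rw [Finset.image_eq_empty.1 this] at hu'
      exact hu'
    · have h1 : fB J x ∈ u'.image (fB J') := heq ▸ Finset.mem_image_of_mem _ hx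
      obtain ⟨x', hx', h2⟩ := Finset.mem_image.1 h1
      have h3 : idx J' = idx J := by
        have e1 : (fB J' x') % KB = idx J' := by
          show (KB * nth J' (rk x') + idx J') % KB = idx J'
          rw [Nat.mul_add_mod, Nat.mod_eq_of_lt (hidxlt J' hJ')]
        have e2 : (fB J x) % KB = idx J := by
          show (KB * nth J (rk x) + idx J) % KB = idx J
          rw [Nat.mul_add_mod, Nat.mod_eq_of_lt (hidxlt J hJ)]
        rw [← e1, ← e2, h2]
      have h4 : J' = J := hidxinj J' hJ' J hJ h3
      subst h4
      have h5 : u = u' := image_eq_image_of_injOn (hfmono J' hJ).injOn hub hu'b heq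
      rwa [h5]
  have hinjpt : ∀ J ∈ Qs, ∀ u' ⊆ b, Set.InjOn P.pt ↑(u'.image (fB J)) := by
    intro J hJ u' hu'b
    intro y hy z hz hyz
    simp only [Finset.coe_image, Set.mem_image] at hy hz
    obtain ⟨x1, hx1, rfl⟩ := hy
    obtain ⟨x2, hx2, rfl⟩ := hz
    have hx1b : x1 ∈ b := hu'b (Finset.mem_coe.1 hx1)
    have hx2b : x2 ∈ b := hu'b (Finset.mem_coe.1 hx2)
    rw [hptv J hJ x1 hx1b, hptv J hJ x2 hx2b] at hyz
    have hcard : J.card = q := ((hmemQs J).1 hJ).2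
    have hrk12 : rk x1 = rk x2 := by
      by_contra hcon
      rcases Nat.lt_or_ge (rk x1) (rk x2) with h | h
      · exact absurd hyz (Nat.ne_of_lt (hnthmono J _ (by rw [hcard]; exact hrklt x1 hx1b)
          _ (by rw [hcard]; exact hrklt x2 hx2b) h))
      · have h' : rk x2 < rk x1 := by omega
        exact absurd hyz.symm (Nat.ne_of_lt (hnthmono J _
          (by rw [hcard]; exact hrklt x2 hx2b) _ (by rw [hcard]; exact hrklt x1 hx1b) h'))
    have hx12 : x1 = x2 := hrkmono.injOn (Finset.mem_coe.2 hx1b) (Finset.mem_coe.2 hx2b) hrk12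
    rw [hx12]
  have hValid : P.Valid k := by
    constructor
    · obtain ⟨x₀, hx₀⟩ := hbne
      have hJ₀ : Finset.range q ∈ Qs := (hmemQs _).2
        ⟨Finset.range_subset_range.2 hn, Finset.card_range q⟩
      exact ⟨fB (Finset.range q) x₀,
        Finset.mem_biUnion.2 ⟨_, hJ₀, Finset.mem_image_of_mem _ hx₀⟩⟩
    · intro v hv
      obtain ⟨J, hJ, hv⟩ := Finset.mem_biUnion.1 hv
      obtain ⟨x, hx, rfl⟩ := Finset.mem_image.1 hv
      rw [hptv J hJ x hx]
      have hcard : J.card = q := ((hmemQs J).1 hJ).2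
      have := hnthmem J (rk x) (by rw [hcard]; exact hrklt x hx)
      have := ((hmemQs J).1 hJ).1 this
      exact Finset.mem_range.1 this
    · intro v _ w _ h
      by_contra hcon
      have h1 : w ≤ v := by omega
      have h2 : w / KB ≤ v / KB := Nat.div_le_div_right h1
      have h3 : v / KB < w / KB := h
      omega
    · rintro u ⟨J, hJ, u', hu', rfl⟩
      intro y hy
      obtain ⟨x, hx, rfl⟩ := Finset.mem_image.1 hy
      exact Finset.mem_biUnion.2 ⟨J, hJ, Finset.mem_image_of_mem _ (hbsub u' hu' hx)⟩
    · rintro u v huv ⟨J, hJ, u', hu', rfl⟩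
      obtain ⟨u₀, hu₀, rfl⟩ := subset_image' huv
      exact ⟨J, hJ, u₀, hbher u₀ u' hu₀ hu', rfl⟩
    · intro v hv
      obtain ⟨J, hJ, hv⟩ := Finset.mem_biUnion.1 hv
      obtain ⟨x, hx, rfl⟩ := Finset.mem_image.1 hv
      obtain ⟨u, hu, hxu⟩ := hbcov x hx
      have h1 : ({x} : Finset ℕ) ∈ Sb := hbher {x} u (Finset.singleton_subset_iff.2 hxu) hu
      exact ⟨J, hJ, {x}, h1, by rw [Finset.image_singleton]⟩
    · rintro u ⟨J, hJ, u', hu', rfl⟩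
      exact le_trans (Finset.card_image_le) (hbdim u' hu')
    · rintro u ⟨J, hJ, u', hu', rfl⟩
      exact hinjpt J hJ u' (hbsub u' hu')
  refine ⟨P, hValid, rfl, fun J hJr hJc => ?_⟩
  have hJ : J ∈ Qs := (hmemQs J).2 ⟨hJr, hJc⟩
  refine ⟨fB J, ⟨hfmono J hJ, ?_, fun u hu => ?_⟩, ?_, ?_⟩
  · intro x hx
    exact Finset.mem_biUnion.2 ⟨J, hJ, Finset.mem_image_of_mem _ (Finset.mem_coe.1 hx)⟩
  · constructor
    · intro hmem; exact hedge_fwd J hJ u hmem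
    · intro hmem; exact hedge_back J hJ u hu hmem
  · exact hinjpt J hJ b (Finset.Subset.refl b)
  · have hcard : J.card = q := hJc
    have h1 : (b.image (fB J)).image P.pt = b.image (fun x => nth J (rk x)) := by
      rw [Finset.image_image]
      exact Finset.image_congr (fun x hx => hptv J hJ x hx)
    have h2 : b.image (fun x => nth J (rk x)) = (b.image rk).image (nth J) := by
      rw [Finset.image_image]; rfl
    rw [h1, h2, hrkim]
    apply Finset.eq_of_subset_of_card_le
    · intro y hy
      obtain ⟨i, hi, rfl⟩ := Finset.mem_image.1 hy
      exact hnthmem J i (by rw [hcard]; exact Finset.mem_range.1 hi)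
    · have hinj : Set.InjOn (nth J) ↑(Finset.range q) := by
        intro i hi j hj hij
        by_contra hcon
        rcases Nat.lt_or_ge i j with h | h
        · exact absurd hij (Nat.ne_of_lt (hnthmono J i (by rw [hcard]; exact Finset.mem_range.1 hi)
            j (by rw [hcard]; exact Finset.mem_range.1 hj) h))
        · have h' : j < i := by omega
          exact absurd hij.symm (Nat.ne_of_lt (hnthmono J j
            (by rw [hcard]; exact Finset.mem_range.1 hj) i
            (by rw [hcard]; exact Finset.mem_range.1 hi) h'))
      rw [Finset.card_image_of_injOn hinj, Finset.card_range, hcard]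

/-! ### The Hales–Jewett step -/

open Combinatorics in
lemma step_lemma (k r : ℕ) (hr : 0 < r) (a : Finset ℕ) (Sa : Set (Finset ℕ))
    (P : Pic) (hP : P.Valid k) (I : Finset ℕ) :
    ∃ Q : Pic, Q.Valid k ∧ Q.n = P.n ∧ ∀ χ : Finset ℕ → Fin r, ∃ g : ℕ → ℕ,
      PEmb g P Q ∧ ∃ γ : Fin r, ∀ d, ACopyOver a Sa d I Q → d ⊆ P.V.image g → χ d = γ := by
  classical
  set αF : Finset (Finset ℕ) := P.V.powerset.filter (fun d => ACopyOver a Sa d I P) with hαF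
  have hαmem : ∀ dd : {d // d ∈ αF}, ACopyOver a Sa ↑dd I P ∧ (↑dd : Finset ℕ) ⊆ P.V := by
    rintro ⟨d, hd⟩
    rw [hαF, Finset.mem_filter, Finset.mem_powerset] at hd
    exact ⟨hd.2, hd.1⟩
  obtain ⟨ι, ιfin, hHJ⟩ :=
    Line.exists_mono_in_high_dimension {d // d ∈ αF} (Fin r)
  haveI : Fintype ι := ιfin
  haveI lineFin : Fintype (Line {d // d ∈ αF} ι) :=
    Fintype.ofInjective (fun ℓ => ℓ.idxFun)
      (fun ℓ ℓ' h => by cases ℓ; cases ℓ'; simpa using h)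
  set M : ℕ := P.V.sup id + 1 with hM
  have hM0 : 0 < M := by omega
  have hMv : ∀ v ∈ P.V, v < M := by
    intro v hv
    have : id v ≤ P.V.sup id := Finset.le_sup hv
    simpa [hM] using Nat.lt_succ_of_le this
  set N : ℕ := Fintype.card ι with hN
  set eqι : ι ≃ Fin N := Fintype.equivFin ι with heqι
  set enc : (ι → ℕ) → ℕ := fun x => ∑ j : ι, x j * M ^ ((eqι j : ℕ)) with henc
  have hencR : ∀ x : ι → ℕ,
      enc x = encR M (fun i => if h : i < N then x (eqι.symm ⟨i, h⟩) else 0) N := by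
    intro x
    rw [encR, ← Fin.sum_univ_eq_sum_range
      (fun i => (if h : i < N then x (eqι.symm ⟨i, h⟩) else 0) * M ^ i) N]
    have h1 : ∀ i : Fin N, (if h : (i:ℕ) < N then x (eqι.symm ⟨(i:ℕ), h⟩) else 0) * M ^ (i:ℕ)
        = x (eqι.symm i) * M ^ (i:ℕ) := by
      intro i
      have h2 : (⟨(i:ℕ), i.isLt⟩ : Fin N) = i := Fin.eta _ _
      rw [dif_pos i.isLt, h2]
    rw [Finset.sum_congr rfl (fun i _ => h1 i)]
    rw [henc, ← Equiv.sum_comp eqι (fun i : Fin N => x (eqι.symm i) * M ^ (i : ℕ))]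
    simp
  have henclt : ∀ x : ι → ℕ, (∀ j, x j < M) → enc x < M ^ N := by
    intro x hx
    rw [hencR]
    apply encR_lt hM0
    intro i hi
    rw [dif_pos hi]
    exact hx _
  have hencinj : ∀ x y : ι → ℕ, (∀ j, x j < M) → (∀ j, y j < M) →
      enc x = enc y → x = y := by
    intro x y hx hy h
    rw [hencR x, hencR y] at h
    have h2 := encR_inj hM0 (fun i hi => by rw [dif_pos hi]; exact hx _)
      (fun i hi => by rw [dif_pos hi]; exact hy _) h
    funext j
    have h3 := h2 (eqι j) (eqι j).isLt
    rw [dif_pos (eqι j).isLt, dif_pos (eqι j).isLt] at h3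
    have h4 : eqι.symm ⟨(eqι j : ℕ), (eqι j).isLt⟩ = j := by
      rw [Fin.eta]; exact eqι.symm_apply_apply j
    rwa [h4] at h3
  set lcode : Line {d // d ∈ αF} ι → ℕ :=
    fun ℓ => ((Fintype.equivFin (Line {d // d ∈ αF} ι)) ℓ : ℕ) with hlcode
  set L : ℕ := Fintype.card (Line {d // d ∈ αF} ι) with hL
  have hlcode_lt : ∀ ℓ, lcode ℓ < L := fun ℓ => (Fintype.equivFin _ ℓ).isLt
  have hlcode_inj : ∀ ℓ ℓ', lcode ℓ = lcode ℓ' → ℓ = ℓ' := by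
    intro ℓ ℓ' h
    exact (Fintype.equivFin _).injective (Fin.ext h)
  set B : ℕ := M ^ N + (L + 1) * M with hB
  set lv : Line {d // d ∈ αF} ι → ι → ℕ → ℕ :=
    fun ℓ j v => (ℓ.idxFun j).elim v (fun dd => selp P.pt ↑dd (P.pt v)) with hlv
  set g : Line {d // d ∈ αF} ι → ℕ → ℕ := fun ℓ v =>
    B * P.pt v + (if P.pt v ∈ I then enc (fun j => lv ℓ j v)
      else M ^ N + (lcode ℓ * M + v)) with hg
  set QV : Finset ℕ :=
    (Finset.univ : Finset (Line {d // d ∈ αF} ι)).biUnion (fun ℓ => P.V.image (g ℓ)) with hQV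
  set QS : Set (Finset ℕ) := {w | ∃ ℓ u, u ∈ P.S ∧ w = u.image (g ℓ)} with hQS
  set Q : Pic := ⟨P.n, QV, QS, fun v => v / B⟩ with hQ
  -- basic facts about copies over I
  have hacopy_fiber : ∀ dd : {d // d ∈ αF}, ∀ i ∈ I,
      selp P.pt ↑dd i ∈ (↑dd : Finset ℕ) ∧ P.pt (selp P.pt ↑dd i) = i := by
    intro dd i hi
    obtain ⟨⟨hcopy, hinj, him⟩, hsubV⟩ := hαmem dd
    exact selp_mem hinj (him ▸ hi)
  have hlvV : ∀ ℓ j v, v ∈ P.V → P.pt v ∈ I → lv ℓ j v ∈ P.V := by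
    intro ℓ j v hv hI
    rcases h : ℓ.idxFun j with _ | dd
    · simpa [hlv, h] using hv
    · have h1 := (hacopy_fiber dd (P.pt v) hI).1
      have h2 := (hαmem dd).2 h1
      simpa [hlv, h] using h2
  have hlvM : ∀ ℓ j v, v ∈ P.V → P.pt v ∈ I → lv ℓ j v < M :=
    fun ℓ j v hv hI => hMv _ (hlvV ℓ j v hv hI)
  -- local codes are < B
  have hloc1 : ∀ ℓ v, v ∈ P.V → P.pt v ∈ I → enc (fun j => lv ℓ j v) < B := by
    intro ℓ v hv hI
    have h1 := henclt (fun j => lv ℓ j v) (fun j => hlvM ℓ j v hv hI)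
    rw [hB]
    have h2 : (0:ℕ) < (L+1) * M := by positivity
    omega
  have hloc2 : ∀ ℓ v, v ∈ P.V → M ^ N + (lcode ℓ * M + v) < B := by
    intro ℓ v hv
    have h1 : lcode ℓ * M + v < (L + 1) * M := by
      have h2 := hlcode_lt ℓ
      have h3 : lcode ℓ * M + M ≤ L * M + M := by
        have := Nat.mul_le_mul_right M (Nat.le_of_lt h2)
        omega
      have h4 : (L + 1) * M = L * M + M := by ring
      have h5 := hMv v hv
      omega
    omega
  have hlocB : ∀ ℓ v, v ∈ P.V → (if P.pt v ∈ I then enc (fun j => lv ℓ j v)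
      else M ^ N + (lcode ℓ * M + v)) < B := by
    intro ℓ v hv
    split
    · next h => exact hloc1 ℓ v hv h
    · next h => exact hloc2 ℓ v hv
  have hgsplit : ∀ ℓ v, g ℓ v = B * P.pt v + (if P.pt v ∈ I then enc (fun j => lv ℓ j v)
      else M ^ N + (lcode ℓ * M + v)) := fun ℓ v => rfl
  have hB0 : 0 < B := by
    rw [hB]
    have h1 : (0:ℕ) < M ^ N := pow_pos hM0 N
    omega
  have hptQ : ∀ ℓ v, v ∈ P.V → Q.pt (g ℓ v) = P.pt v := by
    intro ℓ v hv
    show (g ℓ v) / B = P.pt v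
    rw [hgsplit, Nat.mul_add_div hB0, Nat.div_eq_of_lt (hlocB ℓ v hv)]
    omega
  have hdec : ∀ ℓ ℓ' v v', v ∈ P.V → v' ∈ P.V → g ℓ v = g ℓ' v' →
      P.pt v = P.pt v' ∧ ((P.pt v ∈ I ∧ ∀ j, lv ℓ j v = lv ℓ' j v') ∨
        (P.pt v ∉ I ∧ ℓ = ℓ' ∧ v = v')) := by
    intro ℓ ℓ' v v' hv hv' h
    have hpt : P.pt v = P.pt v' := by
      have e1 := hptQ ℓ v hv
      have e2 := hptQ ℓ' v' hv'
      rw [← e1, ← e2, h]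
    have hloc : (if P.pt v ∈ I then enc (fun j => lv ℓ j v) else M ^ N + (lcode ℓ * M + v))
        = (if P.pt v' ∈ I then enc (fun j => lv ℓ' j v') else
            M ^ N + (lcode ℓ' * M + v')) := by
      have h' := h
      rw [hgsplit ℓ v, hgsplit ℓ' v'] at h'
      have e3 : B * P.pt v = B * P.pt v' := by rw [hpt]
      have b1 := hlocB ℓ v hv
      have b2 := hlocB ℓ' v' hv'
      omega
    refine ⟨hpt, ?_⟩
    by_cases hin : P.pt v ∈ I
    · left
      refine ⟨hin, ?_⟩
      rw [if_pos hin, if_pos (hpt ▸ hin)] at hloc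
      have hfun := hencinj _ _ (fun j => hlvM ℓ j v hv hin)
        (fun j => hlvM ℓ' j v' hv' (hpt ▸ hin)) hloc
      exact fun j => congrFun hfun j
    · right
      refine ⟨hin, ?_⟩
      rw [if_neg hin, if_neg (hpt ▸ hin)] at hloc
      have h3 : lcode ℓ * M + v = lcode ℓ' * M + v' := by omega
      have hv1 := hMv v hv
      have hv2 := hMv v' hv'
      have hvv : v = v' := by
        have e1 : (lcode ℓ * M + v) % M = v := by
          rw [Nat.add_comm, Nat.add_mul_mod_self_right, Nat.mod_eq_of_lt hv1]
        have e2 : (lcode ℓ' * M + v') % M = v' := by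
          rw [Nat.add_comm, Nat.add_mul_mod_self_right, Nat.mod_eq_of_lt hv2]
        rw [← e1, ← e2, h3]
      have hcc : lcode ℓ = lcode ℓ' := by
        have h4 : lcode ℓ * M = lcode ℓ' * M := by omega
        exact Nat.eq_of_mul_eq_mul_right hM0 h4
      exact ⟨hlcode_inj _ _ hcc, hvv⟩
  have hgmono : ∀ ℓ, StrictMonoOn (g ℓ) ↑P.V := by
    intro ℓ v hv w hw hvw
    have hv' := Finset.mem_coe.1 hv
    have hw' := Finset.mem_coe.1 hw
    have hple : P.pt v ≤ P.pt w := by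
      by_contra hcon
      exact absurd (hP.mono _ hw' _ hv' (lt_of_not_ge hcon)) (not_lt.2 hvw.le)
    rcases hple.lt_or_eq with hlt | heq
    · rw [hgsplit, hgsplit]
      have l1 := hlocB ℓ v hv'
      have l2 : B * (P.pt v + 1) ≤ B * P.pt w := Nat.mul_le_mul_left B (Nat.succ_le_of_lt hlt)
      have l3 : B * (P.pt v + 1) = B * P.pt v + B := by ring
      omega
    · rw [hgsplit, hgsplit, ← heq]
      apply Nat.add_lt_add_left
      by_cases hin : P.pt v ∈ I
      · rw [if_pos hin, if_pos hin]
        have hle : ∀ j, lv ℓ j v ≤ lv ℓ j w := by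
          intro j
          rcases hj : ℓ.idxFun j with _ | dd
          · simp only [hlv, hj, Option.elim_none]
            exact hvw.le
          · simp only [hlv, hj, Option.elim_some]
            rw [heq]
        obtain ⟨j0, hj0⟩ := ℓ.proper
        have hstrict : lv ℓ j0 v < lv ℓ j0 w := by
          simp only [hlv, hj0, Option.elim_none]
          exact hvw
        rw [henc]
        apply Finset.sum_lt_sum
        · intro j _
          exact Nat.mul_le_mul_right _ (hle j)
        · exact ⟨j0, Finset.mem_univ j0, (Nat.mul_lt_mul_right (pow_pos hM0 _)).2 hstrict⟩
      · rw [if_neg hin, if_neg hin]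
        omega
  have hgmem : ∀ ℓ, ∀ v ∈ P.V, g ℓ v ∈ QV := fun ℓ v hv =>
    Finset.mem_biUnion.2 ⟨ℓ, Finset.mem_univ ℓ, Finset.mem_image_of_mem _ hv⟩
  have hQvalid : Q.Valid k := by
    constructor
    · obtain ⟨v₀, hv₀⟩ := hP.ne
      obtain ⟨ℓ₀, -⟩ := hHJ (fun _ => ⟨0, hr⟩)
      exact ⟨g ℓ₀ v₀, hgmem ℓ₀ v₀ hv₀⟩
    · intro v hv
      obtain ⟨ℓ, -, hv⟩ := Finset.mem_biUnion.1 hv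
      obtain ⟨w, hw, rfl⟩ := Finset.mem_image.1 hv
      have e1 : Q.pt (g ℓ w) = P.pt w := hptQ ℓ w hw
      show Q.pt (g ℓ w) < P.n
      rw [e1]
      exact hP.pt_lt w hw
    · intro v _ w _ h
      have h1 : v / B < w / B := h
      by_contra hcon
      have h2 : w ≤ v := by omega
      have h3 : w / B ≤ v / B := Nat.div_le_div_right h2
      omega
    · rintro u ⟨ℓ, u', hu', rfl⟩
      intro y hy
      obtain ⟨x, hx, rfl⟩ := Finset.mem_image.1 hy
      exact hgmem ℓ x (hP.sub u' hu' hx)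
    · intro u w huw hw
      obtain ⟨ℓ, u', hu', rfl⟩ := hw
      obtain ⟨u₀, hu₀, rfl⟩ := subset_image' huw
      exact ⟨ℓ, u₀, hP.her hu₀ hu', rfl⟩
    · intro v hv
      obtain ⟨ℓ, -, hv⟩ := Finset.mem_biUnion.1 hv
      obtain ⟨x, hx, rfl⟩ := Finset.mem_image.1 hv
      exact ⟨ℓ, {x}, hP.cov x hx, by rw [Finset.image_singleton]⟩
    · rintro u ⟨ℓ, u', hu', rfl⟩
      exact le_trans Finset.card_image_le (hP.dim u' hu')
    · rintro u ⟨ℓ, u', hu', rfl⟩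
      have hu'V : u' ⊆ P.V := hP.sub u' hu'
      intro y hy z hz hyz
      simp only [Finset.coe_image, Set.mem_image] at hy hz
      obtain ⟨x1, hx1, rfl⟩ := hy
      obtain ⟨x2, hx2, rfl⟩ := hz
      have hx1V : x1 ∈ P.V := hu'V (Finset.mem_coe.1 hx1)
      have hx2V : x2 ∈ P.V := hu'V (Finset.mem_coe.1 hx2)
      rw [hptQ ℓ x1 hx1V, hptQ ℓ x2 hx2V] at hyz
      rw [hP.inj u' hu' hx1 hx2 hyz]
  have hcol : ∀ ℓ ℓ' (u u' : Finset ℕ), u ⊆ P.V → u' ∈ P.S →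
      u.image (g ℓ) = u'.image (g ℓ') → u ∈ P.S := by
    intro ℓ ℓ' u u' hu hu' heq
    have hu'V : u' ⊆ P.V := hP.sub u' hu'
    by_cases hll : ℓ = ℓ'
    · subst hll
      rw [image_eq_image_of_injOn (hgmono ℓ).injOn hu hu'V heq]
      exact hu'
    have hmatch : ∀ v ∈ u, ∃ v' ∈ u', g ℓ v = g ℓ' v' := by
      intro v hv
      have h1 : g ℓ v ∈ u'.image (g ℓ') := heq ▸ Finset.mem_image_of_mem _ hv
      obtain ⟨v', hv', h⟩ := Finset.mem_image.1 h1
      exact ⟨v', hv', h.symm⟩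
    have hmatch' : ∀ v' ∈ u', ∃ v ∈ u, g ℓ v = g ℓ' v' := by
      intro v' hv'
      have h1 : g ℓ' v' ∈ u.image (g ℓ) := heq.symm ▸ Finset.mem_image_of_mem _ hv'
      obtain ⟨v, hv, h⟩ := Finset.mem_image.1 h1
      exact ⟨v, hv, h⟩
    by_cases hout : ∃ v' ∈ u', P.pt v' ∉ I
    · obtain ⟨v', hv', hnotin⟩ := hout
      obtain ⟨v, hv, hgeq⟩ := hmatch' v' hv'
      obtain ⟨hpt, hcase⟩ := hdec ℓ ℓ' v v' (hu hv) (hu'V hv') hgeq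
      rcases hcase with ⟨hin, -⟩ | ⟨-, hll', -⟩
      · exact absurd (hpt ▸ hin) hnotin
      · exact absurd hll' hll
    push_neg at hout
    have hinu : ∀ v ∈ u, P.pt v ∈ I := by
      intro v hv
      obtain ⟨v', hv', hgeq⟩ := hmatch v hv
      obtain ⟨hpt, -⟩ := hdec ℓ ℓ' v v' (hu hv) (hu'V hv') hgeq
      rw [hpt]
      exact hout v' hv'
    have hdig : ∀ v ∈ u, ∀ v' ∈ u', g ℓ v = g ℓ' v' →
        P.pt v = P.pt v' ∧ ∀ j, lv ℓ j v = lv ℓ' j v' := by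
      intro v hv v' hv' hgeq
      obtain ⟨hpt, hcase⟩ := hdec ℓ ℓ' v v' (hu hv) (hu'V hv') hgeq
      rcases hcase with ⟨-, h⟩ | ⟨hnin, -⟩
      · exact ⟨hpt, h⟩
      · exact absurd (hinu v hv) hnin
    by_cases hcommon : ∃ j, ℓ.idxFun j = none ∧ ℓ'.idxFun j = none
    · obtain ⟨j, hj1, hj2⟩ := hcommon
      have hsub1 : u ⊆ u' := by
        intro v hv
        obtain ⟨v', hv', hgeq⟩ := hmatch v hv
        obtain ⟨-, hlveq⟩ := hdig v hv v' hv' hgeq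
        have h1 := hlveq j
        simp only [hlv, hj1, hj2, Option.elim_none] at h1
        rwa [h1]
      have hsub2 : u' ⊆ u := by
        intro v' hv'
        obtain ⟨v, hv, hgeq⟩ := hmatch' v' hv'
        obtain ⟨-, hlveq⟩ := hdig v hv v' hv' hgeq
        have h1 := hlveq j
        simp only [hlv, hj1, hj2, Option.elim_none] at h1
        rwa [← h1]
      rw [Finset.Subset.antisymm hsub1 hsub2]
      exact hu'
    push_neg at hcommon
    obtain ⟨j0, hj0⟩ := ℓ.proper
    obtain ⟨dd', hdd'⟩ : ∃ dd', ℓ'.idxFun j0 = some dd' :=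
      Option.ne_none_iff_exists'.1 (hcommon j0 hj0)
    obtain ⟨j1, hj1⟩ := ℓ'.proper
    have hj1' : ℓ.idxFun j1 ≠ none := fun h => (hcommon j1 h) hj1
    obtain ⟨dd, hdd⟩ : ∃ dd, ℓ.idxFun j1 = some dd := Option.ne_none_iff_exists'.1 hj1'
    have hud : u ⊆ ↑dd' := by
      intro v hv
      obtain ⟨v', hv', hgeq⟩ := hmatch v hv
      obtain ⟨hpt, hlveq⟩ := hdig v hv v' hv' hgeq
      have h1 := hlveq j0
      simp only [hlv, hj0, hdd', Option.elim_none, Option.elim_some] at h1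
      rw [← hpt] at h1
      have hmem := (hacopy_fiber dd' (P.pt v) (hinu v hv)).1
      rwa [h1]
    have hu'd : u' ⊆ ↑dd := by
      intro v' hv'
      obtain ⟨v, hv, hgeq⟩ := hmatch' v' hv'
      obtain ⟨hpt, hlveq⟩ := hdig v hv v' hv' hgeq
      have h1 := hlveq j1
      simp only [hlv, hj1, hdd, Option.elim_none, Option.elim_some] at h1
      rw [hpt] at h1
      have hmem := (hacopy_fiber dd (P.pt v') (hout v' hv')).1
      rwa [← h1]
    have hPbar : u.image P.pt = u'.image P.pt := by
      have e1 : (u.image (g ℓ)).image Q.pt = u.image P.pt := by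
        rw [Finset.image_image]
        exact Finset.image_congr (fun v hv => hptQ ℓ v (hu hv))
      have e2 : (u'.image (g ℓ')).image Q.pt = u'.image P.pt := by
        rw [Finset.image_image]
        exact Finset.image_congr (fun v hv => hptQ ℓ' v (hu'V hv))
      rw [← e1, ← e2, heq]
    exact (key_transfer hP.mono (hαmem dd').1 (hαmem dd).1 hud hu'd hPbar).2 hu'
  have hEmb : ∀ ℓ, PEmb (g ℓ) P Q := by
    intro ℓ
    refine ⟨⟨hgmono ℓ, fun v hv => hgmem ℓ v hv, fun u hu => ?_⟩, fun v hv => hptQ ℓ v hv⟩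
    constructor
    · intro hmem
      exact ⟨ℓ, u, hmem, rfl⟩
    · rintro ⟨ℓ', u', hu', heq2⟩
      exact hcol ℓ ℓ' u u' hu hu' heq2
  refine ⟨Q, hQvalid, rfl, fun χ => ?_⟩
  set diag : (ι → {d // d ∈ αF}) → Finset ℕ :=
    fun w => I.image (fun i => B * i + enc (fun j => selp P.pt ↑(w j) i)) with hdiagd
  obtain ⟨ℓs, γ, hγ⟩ := hHJ (fun w => χ (diag w))
  have hdiag : ∀ s : {d // d ∈ αF}, (↑s : Finset ℕ).image (g ℓs) = diag (⇑ℓs s) := by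
    intro s
    obtain ⟨⟨⟨f, hf, hfim⟩, hinj, him⟩, hsubV⟩ := hαmem s
    have h1 : ∀ v ∈ (↑s : Finset ℕ), g ℓs v =
        (fun i => B * i + enc (fun j => selp P.pt ↑((⇑ℓs s) j) i)) (P.pt v) := by
      intro v hv
      have hpv : P.pt v ∈ I := him ▸ Finset.mem_image_of_mem _ hv
      rw [hgsplit, if_pos hpv]
      have h2 : (fun j => lv ℓs j v) = fun j => selp P.pt ↑((⇑ℓs s) j) (P.pt v) := by
        funext j
        rcases hj : ℓs.idxFun j with _ | dd
        · have h3 : (⇑ℓs s) j = s := by simp [Line.coe_apply, hj]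
          rw [h3]
          simp only [hlv, hj, Option.elim_none]
          exact (selp_eq hinj hv).symm
        · have h3 : (⇑ℓs s) j = dd := by simp [Line.coe_apply, hj]
          rw [h3]
          simp only [hlv, hj, Option.elim_some]
      rw [h2]
    calc (↑s : Finset ℕ).image (g ℓs)
        = (↑s : Finset ℕ).image
            ((fun i => B * i + enc (fun j => selp P.pt ↑((⇑ℓs s) j) i)) ∘ P.pt) :=
          Finset.image_congr (fun v hv => h1 v hv)
      _ = ((↑s : Finset ℕ).image P.pt).image
            (fun i => B * i + enc (fun j => selp P.pt ↑((⇑ℓs s) j) i)) :=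
          Finset.image_image.symm
      _ = diag (⇑ℓs s) := by rw [him]
  refine ⟨g ℓs, hEmb ℓs, γ, fun d hd hdsub => ?_⟩
  obtain ⟨d₀, hd₀, hd₀im⟩ := pemb_pullback (hEmb ℓs) hP.mono hd hdsub
  have hd₀V : d₀ ⊆ P.V := hd₀.copy_sub
  have hd₀mem : d₀ ∈ αF := by
    rw [hαF, Finset.mem_filter, Finset.mem_powerset]
    exact ⟨hd₀V, hd₀⟩
  have hfin : d = diag (⇑ℓs ⟨d₀, hd₀mem⟩) := by
    rw [← hd₀im]
    exact hdiag ⟨d₀, hd₀mem⟩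
  rw [hfin]
  exact hγ _

/-! ### Iterating the step over a list of patterns -/

lemma chain_lemma (k r : ℕ) (hr : 0 < r) (a : Finset ℕ) (Sa : Set (Finset ℕ)) :
    ∀ (Is : List (Finset ℕ)) (P : Pic), P.Valid k →
    ∃ Q : Pic, Q.Valid k ∧ Q.n = P.n ∧ ∀ χ : Finset ℕ → Fin r, ∃ G : ℕ → ℕ,
      PEmb G P Q ∧ ∃ c : Finset ℕ → Fin r,
        ∀ I ∈ Is, ∀ d, ACopyOver a Sa d I Q → d ⊆ P.V.image G → χ d = c I := by
  intro Is
  induction Is with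
  | nil =>
    intro P hP
    refine ⟨P, hP, rfl, fun χ => ⟨id, ⟨⟨strictMonoOn_id, fun x hx => hx, fun u hu => ?_⟩,
      fun v hv => rfl⟩, fun _ => ⟨0, hr⟩, fun I hI => absurd hI List.not_mem_nil⟩⟩
    rw [Finset.image_id]
  | cons I Is ih =>
    intro P hP
    obtain ⟨Q₁, hQ₁, hn₁, hstep⟩ := step_lemma k r hr a Sa P hP I
    obtain ⟨Q, hQ, hn, hchain⟩ := ih Q₁ hQ₁
    refine ⟨Q, hQ, by rw [hn, hn₁], fun χ => ?_⟩
    obtain ⟨g₂, hg₂, c₂, hc₂⟩ := hchain χ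
    obtain ⟨g₁, hg₁, γ, hγ⟩ := hstep (fun u => χ (u.image g₂))
    have hsubQ₁ : P.V.image (g₂ ∘ g₁) ⊆ Q₁.V.image g₂ := by
      intro y hy
      obtain ⟨x, hx, rfl⟩ := Finset.mem_image.1 hy
      exact Finset.mem_image_of_mem _ (hg₁.1.2.1 hx)
    refine ⟨g₂ ∘ g₁, hg₁.comp hg₂, fun J => if J = I then γ else c₂ J, ?_⟩
    intro J hJ d hd hdsub
    by_cases hJI : J = I
    · subst hJI
      have hdsub' : d ⊆ Q₁.V.image g₂ := hdsub.trans hsubQ₁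
      obtain ⟨d₁, hd₁, hd₁im⟩ := pemb_pullback hg₂ hQ₁.mono hd hdsub'
      have hd₁V : d₁ ⊆ Q₁.V := hd₁.copy_sub
      have hd₁sub : d₁ ⊆ P.V.image g₁ := by
        intro y hy
        have h1 : g₂ y ∈ d := hd₁im ▸ Finset.mem_image_of_mem _ hy
        have h2 := hdsub h1
        obtain ⟨x, hx, hx2⟩ := Finset.mem_image.1 h2
        have h3 : g₁ x ∈ Q₁.V := hg₁.1.2.1 hx
        have h4 : y ∈ Q₁.V := hd₁V hy
        have h5 : g₁ x = y := hg₂.1.1.injOn (Finset.mem_coe.2 h3) (Finset.mem_coe.2 h4) hx2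
        exact h5 ▸ Finset.mem_image_of_mem _ hx
      have hfin := hγ d₁ hd₁ hd₁sub
      show χ d = if J = J then γ else c₂ J
      rw [if_pos rfl, ← hd₁im]
      exact hfin
    · have hJmem : J ∈ Is := by
        rcases List.mem_cons.1 hJ with h | h
        · exact absurd h hJI
        · exact h
      show χ d = if J = I then γ else c₂ J
      rw [if_neg hJI]
      exact hc₂ J hJmem d hd (hdsub.trans hsubQ₁)

/-! ### Main theorem -/

/-- Ramsey property for the class `𝒜𝒫_k` of finite ordered `k`-polyhedra (`k > 0`):
if `(a,S_a)` has a copy inside `(b,S_b)` then for every `r ≥ 1` there is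
`(c,S_c) ∈ 𝒜𝒫_k` such that for every `r`-coloring of the copies of `(a,S_a)` inside
`(c,S_c)` there is a copy of `(b,S_b)` inside `(c,S_c)` all of whose copies of
`(a,S_a)` get the same color. -/
theorem finOrdPolyK_ramsey_class (k : ℕ) (hk : 0 < k) (a b : Finset ℕ)
    (Sa Sb : Set (Finset ℕ)) (ha : FinOrdPolyK k a Sa) (hb : FinOrdPolyK k b Sb)
    (hab : ∃ d : Finset ℕ, IsCopy d a Sa b Sb) (r : ℕ) (hr : 1 ≤ r) :
    ∃ (c : Finset ℕ) (Sc : Set (Finset ℕ)), FinOrdPolyK k c Sc ∧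
      ∀ χ : Finset ℕ → Fin r, ∃ e : Finset ℕ, IsCopy e b Sb c Sc ∧
        ∀ d d' : Finset ℕ, IsCopy d a Sa c Sc → IsCopy d' a Sa c Sc →
          d ⊆ e → d' ⊆ e → χ d = χ d' := by
  classical
  set p := a.card with hp
  set q := b.card with hq
  obtain ⟨NR, hNR⟩ := setRamsey p r q hr
  set n := max NR q with hn
  obtain ⟨P0, hP0, hP0n, hbase⟩ := base_lemma k q n b Sb hb rfl (le_max_right _ _)
  set Is := ((Finset.range n).powersetCard p).toList with hIs
  obtain ⟨C, hC, hCn, hchain⟩ := chain_lemma k r hr a Sa Is P0 hP0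
  refine ⟨C.V, C.S, ⟨hC.ne, hC.sub, fun u v huv hv => hC.her huv hv,
    fun i hi => ⟨{i}, hC.cov i hi, Finset.mem_singleton_self i⟩, hC.dim⟩, fun χ => ?_⟩
  obtain ⟨G, hG, c, hc⟩ := hchain χ
  have hTcard : NR ≤ (Finset.range n).card := by
    rw [Finset.card_range]
    exact le_max_left _ _
  obtain ⟨J, hJsub, hJcard, γ, hγ⟩ := hNR (Finset.range n) hTcard c
  obtain ⟨fJ, hfJ, hfJinj, hfJim⟩ := hbase J hJsub hJcard
  set e := (b.image fJ).image G with he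
  have hecopy : IsCopy e b Sb C.V C.S :=
    ⟨G ∘ fJ, hfJ.trans hG.1, by rw [he, ← Finset.image_image]⟩
  refine ⟨e, hecopy, fun d d' hd hd' hde hd'e => ?_⟩
  have heV : ∀ y ∈ b.image fJ, y ∈ P0.V := by
    intro y hy
    obtain ⟨x, hx, rfl⟩ := Finset.mem_image.1 hy
    exact hfJ.2.1 hx
  have heinj : Set.InjOn C.pt ↑e := by
    intro y hy z hz hyz
    obtain ⟨y₀, hy₀, rfl⟩ := Finset.mem_image.1 (Finset.mem_coe.1 hy)
    obtain ⟨z₀, hz₀, rfl⟩ := Finset.mem_image.1 (Finset.mem_coe.1 hz)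
    rw [hG.2 y₀ (heV _ hy₀), hG.2 z₀ (heV _ hz₀)] at hyz
    rw [hfJinj (Finset.mem_coe.2 hy₀) (Finset.mem_coe.2 hz₀) hyz]
  have heim : e.image C.pt = J := by
    have h2 : (b.image fJ).image (C.pt ∘ G) = (b.image fJ).image P0.pt :=
      Finset.image_congr (fun y hy => hG.2 y (heV y (Finset.mem_coe.1 hy)))
    rw [he, Finset.image_image, h2, hfJim]
  have key : ∀ d₂, IsCopy d₂ a Sa C.V C.S → d₂ ⊆ e → χ d₂ = γ := by
    intro d₂ hd₂ hd₂e
    have hd₂inj : Set.InjOn C.pt ↑d₂ := heinj.mono (Finset.coe_subset.2 hd₂e)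
    set Id := d₂.image C.pt with hId
    have hIdJ : Id ⊆ J := by
      intro i hi
      obtain ⟨y, hy, rfl⟩ := Finset.mem_image.1 hi
      rw [← heim]
      exact Finset.mem_image_of_mem _ (hd₂e hy)
    have hIdcard : Id.card = p := by
      obtain ⟨f₂, hf₂, hf₂im⟩ := hd₂
      have hcd : d₂.card = p := by
        rw [← hf₂im, Finset.card_image_of_injOn hf₂.1.injOn]
      rw [hId, Finset.card_image_of_injOn hd₂inj, hcd]
    have hImem : Id ∈ Is := by
      rw [hIs, Finset.mem_toList, Finset.mem_powersetCard]
      exact ⟨hIdJ.trans hJsub, hIdcard⟩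
    have hACopy : ACopyOver a Sa d₂ Id C := ⟨hd₂, hd₂inj, rfl⟩
    have hd₂sub : d₂ ⊆ P0.V.image G := by
      refine hd₂e.trans ?_
      rw [he]
      exact Finset.image_subset_image (fun y hy => heV y hy)
    rw [hc Id hImem d₂ hACopy hd₂sub]
    exact hγ Id hIdJ hIdcard
  rw [key d hd hde, key d' hd' hd'e]
end
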